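/- arXiv:1707.05296 — 8 statements merged into one kernel-verified Lean document; each statement's English description precedes it below -/
import Mathlib

section
/- Let ρ be the probability measure on ℝⁿ with strictly positive density ρ(z) = exp(−H(z)) with respect to Lebesgue measure, where H is continuously differentiable. Let φ : ℝⁿ → ℝⁿ be a continuously differentiable vector field, λ : ℝⁿ → [0,∞) a measurable event rate with ∫ λ dρ < ∞, Q a Markov kernel from ℝⁿ to ℝⁿ, and S : ℝⁿ → ℝⁿ a measurable map whose pushforward of ρ equals ρ. Assume: (i) λ(S(z)) − λ(z) = div φ(z) − ⟨∇H(z), φ(z)⟩ for all z; (ii) for every bounded measurable f, ∫∫ f(z′) λ(z) Q(z,dz′) ρ(dz) = ∫ f(z′) λ(S(z′)) ρ(dz′). Then for every compactly supported continuously differentiable function f : ℝⁿ → ℝ, ∫ [ ⟨φ(z), ∇f(z)⟩ + λ(z) ∫ (f(z′) − f(z)) Q(z,dz′) ] ρ(dz) = 0; that is, the generator of the piecewise-deterministic Markov process with drift φ, rate λ and event kernel Q integrates to zero against ρ, so ρ is invariant. -/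
open MeasureTheory ProbabilityTheory Real
open scoped RealInnerProductSpace ENNReal NNReal

/-- The divergence of a vector field on `ℝⁿ`, defined as the trace of its derivative. -/
noncomputable def pdmpDivergence {n : ℕ}
    (φ : EuclideanSpace ℝ (Fin n) → EuclideanSpace ℝ (Fin n))
    (z : EuclideanSpace ℝ (Fin n)) : ℝ :=
  LinearMap.trace ℝ (EuclideanSpace ℝ (Fin n)) (fderiv ℝ φ z).toLinearMap

section Aux

variable {n : ℕ}

lemma pdmp_trace_sum (T : EuclideanSpace ℝ (Fin n) →L[ℝ] EuclideanSpace ℝ (Fin n)) :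
    LinearMap.trace ℝ (EuclideanSpace ℝ (Fin n)) T.toLinearMap
      = ∑ i, T (EuclideanSpace.single i 1) i := by
  rw [LinearMap.trace_eq_matrix_trace ℝ ((EuclideanSpace.basisFun (Fin n) ℝ).toBasis)]
  simp [Matrix.trace, LinearMap.toMatrix_apply, Matrix.diag]

lemma pdmp_clm_apply_eq_sum (ℓ : EuclideanSpace ℝ (Fin n) →L[ℝ] ℝ)
    (x : EuclideanSpace ℝ (Fin n)) :
    ∑ i, ℓ (EuclideanSpace.single i 1) * x i = ℓ x := by
  conv_rhs => rw [← (EuclideanSpace.basisFun (Fin n) ℝ).toBasis.sum_repr x]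
  simp [mul_comm]

lemma pdmp_integral_fderiv_apply {h : EuclideanSpace ℝ (Fin n) → ℝ} (hh : ContDiff ℝ 1 h)
    (hc : HasCompactSupport h) (v : EuclideanSpace ℝ (Fin n)) :
    ∫ x, fderiv ℝ h x v = 0 := by
  have hcont : Continuous fun x => fderiv ℝ h x v :=
    (hh.continuous_fderiv one_ne_zero).clm_apply continuous_const
  have hint : Integrable (fun x => fderiv ℝ h x v) volume :=
    hcont.integrable_of_hasCompactSupport (hc.fderiv_apply ℝ v)
  have := integral_mul_fderiv_eq_neg_fderiv_mul_of_integrable (μ := volume)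
    (f := fun _ : EuclideanSpace ℝ (Fin n) => (1:ℝ)) (g := h) (v := v)
    (by simpa using hint) (by simpa using hint)
    (by simpa using hh.continuous.integrable_of_hasCompactSupport hc)
    (fun x _ => differentiable_const (1:ℝ) x) (fun x _ => hh.differentiable one_ne_zero x)
  simpa using this

lemma pdmp_integral_divergence_zero {g : EuclideanSpace ℝ (Fin n) → EuclideanSpace ℝ (Fin n)}
    (hg : ContDiff ℝ 1 g) (hc : HasCompactSupport g) :
    ∫ z, pdmpDivergence g z = 0 := by
  have key : ∀ z, pdmpDivergence g z
      = ∑ i, fderiv ℝ (fun z => g z i) z (EuclideanSpace.single i 1) := by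
    intro z
    rw [pdmpDivergence, pdmp_trace_sum]
    refine Finset.sum_congr rfl fun i _ => ?_
    have : (fun z => g z i) = fun z => (EuclideanSpace.proj (𝕜 := ℝ) i) (g z) := rfl
    rw [this, fderiv_comp' z (EuclideanSpace.proj i).differentiableAt
      ((hg.differentiable one_ne_zero) z)]
    rw [ContinuousLinearMap.fderiv]
    simp
  simp_rw [key]
  rw [integral_finset_sum]
  · refine Finset.sum_eq_zero fun i _ => ?_
    exact pdmp_integral_fderiv_apply ((EuclideanSpace.proj (𝕜 := ℝ) i).contDiff.comp hg)
      (hc.comp_left (g := EuclideanSpace.proj (𝕜 := ℝ) i) (by simp)) _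
  · intro i _
    have hhi : ContDiff ℝ 1 fun z => g z i := (EuclideanSpace.proj (𝕜 := ℝ) i).contDiff.comp hg
    have hci : HasCompactSupport fun z => g z i :=
      hc.comp_left (g := EuclideanSpace.proj (𝕜 := ℝ) i) (by simp)
    exact ((hhi.continuous_fderiv one_ne_zero).clm_apply
      continuous_const).integrable_of_hasCompactSupport (hci.fderiv_apply ℝ _)

lemma pdmp_inner_gradient (h : EuclideanSpace ℝ (Fin n) → ℝ) (z v : EuclideanSpace ℝ (Fin n)) :
    ⟪gradient h z, v⟫ = fderiv ℝ h z v :=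
  InnerProductSpace.toDual_symm_apply

lemma pdmp_divergence_smul {c : EuclideanSpace ℝ (Fin n) → ℝ}
    {φ : EuclideanSpace ℝ (Fin n) → EuclideanSpace ℝ (Fin n)} {z : EuclideanSpace ℝ (Fin n)}
    (hc : DifferentiableAt ℝ c z) (hφ : DifferentiableAt ℝ φ z) :
    pdmpDivergence (fun y => c y • φ y) z
      = c z * pdmpDivergence φ z + fderiv ℝ c z (φ z) := by
  rw [pdmpDivergence, pdmpDivergence, pdmp_trace_sum, pdmp_trace_sum, fderiv_fun_smul hc hφ]
  rw [← pdmp_clm_apply_eq_sum (fderiv ℝ c z) (φ z), Finset.mul_sum, ← Finset.sum_add_distrib]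
  refine Finset.sum_congr rfl fun i _ => ?_
  simp [ContinuousLinearMap.smulRight_apply, mul_comm]

end Aux

/-- sufficient conditions for invariance of a PDMP (global methods). -/
theorem pdmp_generator_integral_zero {n : ℕ}
    (H : EuclideanSpace ℝ (Fin n) → ℝ) (hH : ContDiff ℝ 1 H)
    (ρ : Measure (EuclideanSpace ℝ (Fin n)))
    (hρ : ρ = volume.withDensity (fun z => ENNReal.ofReal (Real.exp (-H z))))
    (hprob : IsProbabilityMeasure ρ)
    (φv : EuclideanSpace ℝ (Fin n) → EuclideanSpace ℝ (Fin n)) (hφ : ContDiff ℝ 1 φv)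
    (lam : EuclideanSpace ℝ (Fin n) → ℝ) (hlam_meas : Measurable lam)
    (hlam_nonneg : ∀ z, 0 ≤ lam z) (hlam_int : Integrable lam ρ)
    (Q : Kernel (EuclideanSpace ℝ (Fin n)) (EuclideanSpace ℝ (Fin n))) [IsMarkovKernel Q]
    (S : EuclideanSpace ℝ (Fin n) → EuclideanSpace ℝ (Fin n)) (hS_meas : Measurable S)
    (hS_pres : Measure.map S ρ = ρ)
    (hrate : ∀ z, lam (S z) - lam z = pdmpDivergence φv z - ⟪gradient H z, φv z⟫)
    (hQ : ∀ f : EuclideanSpace ℝ (Fin n) → ℝ, Measurable f → (∃ C, ∀ z, |f z| ≤ C) →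
      ∫ z, lam z * ∫ z', f z' ∂(Q z) ∂ρ = ∫ z', lam (S z') * f z' ∂ρ) :
    ∀ f : EuclideanSpace ℝ (Fin n) → ℝ, ContDiff ℝ 1 f → HasCompactSupport f →
      ∫ z, (⟪φv z, gradient f z⟫ + lam z * ∫ z', (f z' - f z) ∂(Q z)) ∂ρ = 0 := by
  intro f hf hcf
  -- abbreviations
  set w : EuclideanSpace ℝ (Fin n) → ℝ := fun z => Real.exp (-H z) with hw
  set D : EuclideanSpace ℝ (Fin n) → ℝ :=
    fun z => pdmpDivergence φv z - ⟪gradient H z, φv z⟫ with hD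
  -- a bound on f
  obtain ⟨C, hC⟩ : ∃ C, ∀ z, |f z| ≤ C := by
    obtain ⟨x, hx⟩ := hf.continuous.norm.exists_forall_ge_of_hasCompactSupport hcf.norm
    exact ⟨‖f x‖, fun z => hx z⟩
  -- integrability of f along the kernel
  have hfQint : ∀ z, Integrable f (Q z) := fun z =>
    (integrable_const C).mono' hf.continuous.aestronglyMeasurable
      (ae_of_all _ fun z' => by simpa using hC z')
  set I : EuclideanSpace ℝ (Fin n) → ℝ := fun z => ∫ z', f z' ∂(Q z) with hI
  have hI_meas : StronglyMeasurable I :=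
    MeasureTheory.StronglyMeasurable.integral_kernel_prod_right
      (hf.continuous.stronglyMeasurable.comp_measurable measurable_snd)
  have hI_bound : ∀ z, |I z| ≤ C := by
    intro z
    have h1 : ‖I z‖ ≤ ∫ z', ‖f z'‖ ∂(Q z) := norm_integral_le_integral_norm f
    have h2 : ∫ z', ‖f z'‖ ∂(Q z) ≤ ∫ _, C ∂(Q z) :=
      integral_mono (hfQint z).norm (integrable_const C) fun z' => by
        simpa [Real.norm_eq_abs] using hC z'
    have h3 : ∫ _, C ∂(Q z) = C := by simp
    simpa [Real.norm_eq_abs] using h1.trans (h3 ▸ h2)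
  -- integrability facts with respect to ρ
  have hlamI : Integrable (fun z => lam z * I z) ρ := by
    refine (hlam_int.const_mul C).mono'
      (hlam_meas.aestronglyMeasurable.mul hI_meas.aestronglyMeasurable)
      (ae_of_all _ fun z => ?_)
    rw [Real.norm_eq_abs, abs_mul, abs_of_nonneg (hlam_nonneg z), mul_comm C (lam z)]
    exact mul_le_mul_of_nonneg_left (hI_bound z) (hlam_nonneg z)
  have hlamf : Integrable (fun z => lam z * f z) ρ := by
    refine (hlam_int.const_mul C).mono'
      (hlam_meas.aestronglyMeasurable.mul hf.continuous.aestronglyMeasurable)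
      (ae_of_all _ fun z => ?_)
    rw [Real.norm_eq_abs, abs_mul, abs_of_nonneg (hlam_nonneg z), mul_comm C (lam z)]
    exact mul_le_mul_of_nonneg_left (hC z) (hlam_nonneg z)
  have hlamS : Integrable (fun z => lam (S z)) ρ := by
    have h1 : Integrable lam (Measure.map S ρ) := by rw [hS_pres]; exact hlam_int
    exact (integrable_map_measure hlam_meas.aestronglyMeasurable hS_meas.aemeasurable).mp h1
  have hlamSf : Integrable (fun z => lam (S z) * f z) ρ := by
    refine (hlamS.const_mul C).mono'
      ((hlam_meas.comp hS_meas).aestronglyMeasurable.mul hf.continuous.aestronglyMeasurable)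
      (ae_of_all _ fun z => ?_)
    rw [Real.norm_eq_abs, abs_mul, abs_of_nonneg (hlam_nonneg (S z)), mul_comm C (lam (S z))]
    exact mul_le_mul_of_nonneg_left (hC z) (hlam_nonneg (S z))
  have hDf : Integrable (fun z => D z * f z) ρ := by
    have : (fun z => D z * f z) = fun z => lam (S z) * f z - lam z * f z := by
      funext z; rw [← sub_mul, hrate z]
    rw [this]; exact hlamSf.sub hlamf
  -- the drift term is continuous with compact support
  have hgradf_cont : Continuous (gradient f) := by
    have : gradient f = fun z =>
        (InnerProductSpace.toDual ℝ (EuclideanSpace ℝ (Fin n))).symm (fderiv ℝ f z) := rfl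
    rw [this]
    exact (InnerProductSpace.toDual ℝ (EuclideanSpace ℝ (Fin n))).symm.continuous.comp
      (hf.continuous_fderiv one_ne_zero)
  have hgradf_supp : HasCompactSupport (gradient f) := by
    refine (hcf.fderiv ℝ).mono fun z hz => ?_
    simp only [Function.mem_support] at hz ⊢
    intro h0
    apply hz
    have hgz : gradient f z
        = (InnerProductSpace.toDual ℝ (EuclideanSpace ℝ (Fin n))).symm (fderiv ℝ f z) := rfl
    rw [hgz, h0, map_zero]
  have hdrift_cont : Continuous fun z => ⟪φv z, gradient f z⟫ :=
    hφ.continuous.inner hgradf_cont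
  have hdrift_supp : HasCompactSupport fun z => ⟪φv z, gradient f z⟫ := by
    refine hgradf_supp.mono fun z hz => ?_
    simp only [Function.mem_support] at hz ⊢
    intro h0; apply hz; rw [h0, inner_zero_right]
  have hdrift_int : Integrable (fun z => ⟪φv z, gradient f z⟫) ρ :=
    hdrift_cont.integrable_of_hasCompactSupport hdrift_supp
  -- STEP B : integration by parts for the drift term
  have stepB : ∫ z, ⟪φv z, gradient f z⟫ ∂ρ = - ∫ z, D z * f z ∂ρ := by
    -- the compactly supported C¹ vector field fwφ
    set c : EuclideanSpace ℝ (Fin n) → ℝ := fun z => f z * w z with hc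
    have hw_cd : ContDiff ℝ 1 w := Real.contDiff_exp.comp hH.neg
    have hc_cd : ContDiff ℝ 1 c := hf.mul hw_cd
    have hc_supp : HasCompactSupport c := hcf.mul_right
    set g : EuclideanSpace ℝ (Fin n) → EuclideanSpace ℝ (Fin n) := fun z => c z • φv z with hg
    have hg_cd : ContDiff ℝ 1 g := hc_cd.smul hφ
    have hg_supp : HasCompactSupport g := hc_supp.smul_right
    have h0 : ∫ z, pdmpDivergence g z = 0 := pdmp_integral_divergence_zero hg_cd hg_supp
    -- pointwise identity for the divergence
    have hpt : ∀ z, pdmpDivergence g z = w z * (⟪φv z, gradient f z⟫ + D z * f z) := by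
      intro z
      have hfz : HasFDerivAt f (fderiv ℝ f z) z := (hf.differentiable one_ne_zero z).hasFDerivAt
      have hHz : HasFDerivAt H (fderiv ℝ H z) z := (hH.differentiable one_ne_zero z).hasFDerivAt
      have hwz : HasFDerivAt w (w z • -fderiv ℝ H z) z := by
        simpa [hw] using hHz.neg.exp
      have hcz : HasFDerivAt c (f z • (w z • -fderiv ℝ H z) + w z • fderiv ℝ f z) z :=
        hfz.mul hwz
      rw [pdmp_divergence_smul (hc_cd.differentiable one_ne_zero z) (hφ.differentiable one_ne_zero z),
        hcz.fderiv]
      have e1 : ⟪gradient f z, φv z⟫ = fderiv ℝ f z (φv z) := pdmp_inner_gradient f z (φv z)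
      have e2 : ⟪gradient H z, φv z⟫ = fderiv ℝ H z (φv z) := pdmp_inner_gradient H z (φv z)
      have e3 : ⟪φv z, gradient f z⟫ = fderiv ℝ f z (φv z) := by
        rw [real_inner_comm]; exact e1
      simp only [ContinuousLinearMap.add_apply, ContinuousLinearMap.smul_apply,
        ContinuousLinearMap.neg_apply, hD, hc, e3, ← e2, smul_eq_mul]
      ring
    -- transfer to ρ
    have hρint : ∫ z, (⟪φv z, gradient f z⟫ + D z * f z) ∂ρ = 0 := by
      have hwm : Measurable fun z => (w z).toNNReal :=
        (Real.contDiff_exp.comp hH.neg).continuous.measurable.real_toNNReal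
      have : ρ = volume.withDensity fun z => ((w z).toNNReal : ℝ≥0∞) := by
        rw [hρ]; rfl
      rw [this, integral_withDensity_eq_integral_smul hwm]
      have : (fun z => (w z).toNNReal • (⟪φv z, gradient f z⟫ + D z * f z))
          = fun z => pdmpDivergence g z := by
        funext z
        rw [hpt z, NNReal.smul_def, Real.coe_toNNReal _ (Real.exp_pos _).le]
        rfl
      rw [this, h0]
    have hadd := integral_add hdrift_int hDf
    rw [hρint] at hadd
    linarith [hadd]
  -- STEP A : the jump term
  have hjump : ∀ z, lam z * ∫ z', (f z' - f z) ∂(Q z) = lam z * I z - lam z * f z := by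
    intro z
    rw [integral_sub (hfQint z) (integrable_const (f z)), integral_const]
    simp [mul_sub, hI]
  have hQf := hQ f hf.continuous.measurable ⟨C, hC⟩
  calc ∫ z, (⟪φv z, gradient f z⟫ + lam z * ∫ z', (f z' - f z) ∂(Q z)) ∂ρ
      = ∫ z, (⟪φv z, gradient f z⟫ + (lam z * I z - lam z * f z)) ∂ρ := by
        refine integral_congr_ae (ae_of_all _ fun z => ?_)
        show ⟪φv z, gradient f z⟫ + lam z * ∫ z', (f z' - f z) ∂(Q z)
          = ⟪φv z, gradient f z⟫ + (lam z * I z - lam z * f z)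
        rw [hjump z]
    _ = (∫ z, ⟪φv z, gradient f z⟫ ∂ρ) + ((∫ z, lam z * I z ∂ρ) - ∫ z, lam z * f z ∂ρ) := by
        have hsub : Integrable (fun z => lam z * I z - lam z * f z) ρ := hlamI.sub hlamf
        rw [integral_add hdrift_int hsub, integral_sub hlamI hlamf]
    _ = (∫ z, ⟪φv z, gradient f z⟫ ∂ρ) + ∫ z, D z * f z ∂ρ := by
        rw [hQf, ← integral_sub hlamSf hlamf]
        congr 1
        refine integral_congr_ae (ae_of_all _ fun z => ?_)
        show lam (S z) * f z - lam z * f z = D z * f z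
        rw [← sub_mul, hrate z]
    _ = 0 := by rw [stepB]; ring
end

section
/- Let ρ be the probability measure on ℝⁿ with strictly positive density ρ(z) = exp(−H(z)) with respect to Lebesgue measure, where H is measurable. Let Φ : ℝⁿ → ℝⁿ be a C¹ diffeomorphism with everywhere nonvanishing Jacobian determinant, let α : ℝⁿ → [0,1] be measurable, let Q be a Markov kernel on ℝⁿ, and let S : ℝⁿ → ℝⁿ be a measurable map whose pushforward of ρ equals ρ. Assume: (i) for all z, ρ(z) α(z) = ρ(Φ(z)) α(S(Φ(z))) |det DΦ(z)|; (ii) for every bounded measurable f, ∫∫ f(z′) (1 − α(z)) Q(z,dz′) ρ(dz) = ∫ f(z′) (1 − α(S(z′))) ρ(dz′). Then the discrete-time PDMP transition kernel K(z,·) = α(z) δ_{Φ(z)}(·) + (1 − α(z)) Q(z,·) admits ρ as an invariant distribution: ∫ K(z,A) ρ(dz) = ρ(A) for every measurable set A. -/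
open MeasureTheory ProbabilityTheory Real
open scoped ENNReal

/-- sufficient conditions for invariance of a discrete-time PDMP with kernel
`K(z,·) = α(z) δ_{Φ(z)}(·) + (1 − α(z)) Q(z,·)` targeting `ρ(z) = exp(−H(z))`. -/
theorem discrete_time_pdmp_invariance {n : ℕ}
    (H : EuclideanSpace ℝ (Fin n) → ℝ) (hH_meas : Measurable H)
    (ρ : Measure (EuclideanSpace ℝ (Fin n)))
    (hρ : ρ = volume.withDensity (fun z => ENNReal.ofReal (Real.exp (-H z))))
    (hprob : IsProbabilityMeasure ρ)
    (Φ : EuclideanSpace ℝ (Fin n) → EuclideanSpace ℝ (Fin n))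
    (hΦ : ContDiff ℝ 1 Φ)
    (Φinv : EuclideanSpace ℝ (Fin n) → EuclideanSpace ℝ (Fin n))
    (hΦinv : ContDiff ℝ 1 Φinv)
    (hleft : Function.LeftInverse Φinv Φ) (hright : Function.RightInverse Φinv Φ)
    (hjac : ∀ z, LinearMap.det ((fderiv ℝ Φ z).toLinearMap) ≠ 0)
    (α : EuclideanSpace ℝ (Fin n) → ℝ) (hα_meas : Measurable α)
    (hα_range : ∀ z, α z ∈ Set.Icc (0 : ℝ) 1)
    (Q : Kernel (EuclideanSpace ℝ (Fin n)) (EuclideanSpace ℝ (Fin n))) [IsMarkovKernel Q]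
    (S : EuclideanSpace ℝ (Fin n) → EuclideanSpace ℝ (Fin n)) (hS_meas : Measurable S)
    (hS_pres : Measure.map S ρ = ρ)
    (haccept : ∀ z, Real.exp (-H z) * α z
      = Real.exp (-H (Φ z)) * α (S (Φ z)) * |LinearMap.det ((fderiv ℝ Φ z).toLinearMap)|)
    (hQ : ∀ f : EuclideanSpace ℝ (Fin n) → ℝ, Measurable f → (∃ C, ∀ z, |f z| ≤ C) →
      ∫ z, (1 - α z) * ∫ z', f z' ∂(Q z) ∂ρ = ∫ z', (1 - α (S z')) * f z' ∂ρ) :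
    ∀ A : Set (EuclideanSpace ℝ (Fin n)), MeasurableSet A →
      ∫⁻ z, (ENNReal.ofReal (α z) * Measure.dirac (Φ z) A
        + ENNReal.ofReal (1 - α z) * Q z A) ∂ρ = ρ A := by
  intro A hA
  have hΦ_meas : Measurable Φ := hΦ.continuous.measurable
  have hαS_meas : Measurable fun z => α (S z) := hα_meas.comp hS_meas
  have hw_meas : Measurable fun z => ENNReal.ofReal (Real.exp (-H z)) :=
    (Real.measurable_exp.comp hH_meas.neg).ennreal_ofReal
  have hind_meas : Measurable (A.indicator (1 : EuclideanSpace ℝ (Fin n) → ℝ≥0∞)) := measurable_one.indicator hA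
  -- rewrite the dirac measure as an indicator
  simp only [Measure.dirac_apply' _ hA]
  -- measurability of the two summands
  have hm1 : Measurable fun z => ENNReal.ofReal (α z) * A.indicator 1 (Φ z) :=
    hα_meas.ennreal_ofReal.mul (hind_meas.comp hΦ_meas)
  have hm2 : Measurable fun z => ENNReal.ofReal (1 - α z) * Q z A :=
    (measurable_const.sub hα_meas).ennreal_ofReal.mul (Q.measurable_coe hA)
  rw [lintegral_add_left hm1]
  -- Part 1: deterministic move, change of variables
  have key1 : ∫⁻ z, ENNReal.ofReal (α z) * A.indicator 1 (Φ z) ∂ρ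
      = ∫⁻ z, ENNReal.ofReal (α (S z)) * A.indicator 1 z ∂ρ := by
    rw [hρ, lintegral_withDensity_eq_lintegral_mul _ hw_meas hm1,
      lintegral_withDensity_eq_lintegral_mul _ hw_meas (show Measurable fun z => ENNReal.ofReal (α (S z)) * A.indicator 1 z from hαS_meas.ennreal_ofReal.mul hind_meas)]
    have hcov := lintegral_image_eq_lintegral_abs_det_fderiv_mul volume MeasurableSet.univ
      (fun x _ => ((hΦ.differentiable one_ne_zero) x).hasFDerivAt.hasFDerivWithinAt)
      (hleft.injective.injOn)
      (fun x => ENNReal.ofReal (Real.exp (-H x) * α (S x)) * A.indicator 1 x)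
    rw [Set.image_univ, hright.surjective.range_eq, Measure.restrict_univ] at hcov
    calc ∫⁻ z, ((fun z => ENNReal.ofReal (Real.exp (-H z))) *
            fun z => ENNReal.ofReal (α z) * A.indicator 1 (Φ z)) z ∂volume
        = ∫⁻ z, ENNReal.ofReal |(fderiv ℝ Φ z).det| *
            (ENNReal.ofReal (Real.exp (-H (Φ z)) * α (S (Φ z))) * A.indicator 1 (Φ z)) ∂volume := by
          refine lintegral_congr fun z => ?_
          simp only [Pi.mul_apply]
          rw [← mul_assoc, ← ENNReal.ofReal_mul (Real.exp_nonneg _), haccept z,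
            show |LinearMap.det ((fderiv ℝ Φ z).toLinearMap)| = |(fderiv ℝ Φ z).det| from rfl,
            ENNReal.ofReal_mul (mul_nonneg (Real.exp_nonneg _) (hα_range _).1), mul_comm (ENNReal.ofReal _) (ENNReal.ofReal _),
            mul_assoc]
      _ = ∫⁻ x, ENNReal.ofReal (Real.exp (-H x) * α (S x)) * A.indicator 1 x ∂volume := hcov.symm
      _ = ∫⁻ z, ((fun z => ENNReal.ofReal (Real.exp (-H z))) *
            fun z => ENNReal.ofReal (α (S z)) * A.indicator 1 z) z ∂volume := by
          refine lintegral_congr fun z => ?_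
          simp only [Pi.mul_apply]
          rw [ENNReal.ofReal_mul (Real.exp_nonneg _), mul_assoc]
  -- Part 2: the jump part, via hQ applied to the indicator of A
  have key2 : ∫⁻ z, ENNReal.ofReal (1 - α z) * Q z A ∂ρ
      = ∫⁻ z, ENNReal.ofReal (1 - α (S z)) * A.indicator 1 z ∂ρ := by
    have hprobQ : ∀ z, IsProbabilityMeasure (Q z) := fun z => IsMarkovKernel.isProbabilityMeasure z
    have hQA_le : ∀ z, (Q z A).toReal ≤ 1 := fun z => by
      have := (hprobQ z)
      exact ENNReal.toReal_le_of_le_ofReal one_pos.le (by simpa using prob_le_one)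
    have hbound : ∀ z, |A.indicator (1 : EuclideanSpace ℝ (Fin n) → ℝ) z| ≤ 1 := fun z => by
      by_cases hz : z ∈ A <;> simp [hz]
    have hint := hQ (A.indicator 1) (measurable_one.indicator hA) ⟨1, hbound⟩
    have hinner : ∀ z, ∫ z', A.indicator (1 : EuclideanSpace ℝ (Fin n) → ℝ) z' ∂(Q z) = (Q z A).toReal := fun z => by
      rw [MeasureTheory.integral_indicator_one hA]
      rfl
    simp only [hinner] at hint
    -- integrability of both sides
    have hf1_meas : Measurable fun z => (1 - α z) * (Q z A).toReal :=
      (measurable_const.sub hα_meas).mul (Q.measurable_coe hA).ennreal_toReal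
    have hf1_int : Integrable (fun z => (1 - α z) * (Q z A).toReal) ρ := by
      refine (integrable_const (1 : ℝ)).mono' hf1_meas.aestronglyMeasurable ?_
      refine Filter.Eventually.of_forall fun z => ?_
      rw [norm_mul, Real.norm_eq_abs, Real.norm_eq_abs,
        abs_of_nonneg (sub_nonneg.2 (hα_range z).2), abs_of_nonneg ENNReal.toReal_nonneg]
      calc (1 - α z) * (Q z A).toReal ≤ 1 * 1 := by
            exact mul_le_mul (by linarith [(hα_range z).1]) (hQA_le z) ENNReal.toReal_nonneg one_pos.le
        _ = 1 := one_mul 1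
    have hf2_meas : Measurable fun z => (1 - α (S z)) * A.indicator (1 : EuclideanSpace ℝ (Fin n) → ℝ) z :=
      (measurable_const.sub hαS_meas).mul (measurable_one.indicator hA)
    have hf2_int : Integrable (fun z => (1 - α (S z)) * A.indicator (1 : EuclideanSpace ℝ (Fin n) → ℝ) z) ρ := by
      refine (integrable_const (1 : ℝ)).mono' hf2_meas.aestronglyMeasurable ?_
      refine Filter.Eventually.of_forall fun z => ?_
      rw [norm_mul, Real.norm_eq_abs, Real.norm_eq_abs,
        abs_of_nonneg (sub_nonneg.2 (hα_range (S z)).2)]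
      calc (1 - α (S z)) * |A.indicator (1 : EuclideanSpace ℝ (Fin n) → ℝ) z| ≤ 1 * 1 :=
            mul_le_mul (by linarith [(hα_range (S z)).1]) (hbound z) (abs_nonneg _) one_pos.le
        _ = 1 := one_mul 1
    have hL : ∫⁻ z, ENNReal.ofReal (1 - α z) * Q z A ∂ρ
        = ENNReal.ofReal (∫ z, (1 - α z) * (Q z A).toReal ∂ρ) := by
      rw [ofReal_integral_eq_lintegral_ofReal hf1_int
        (Filter.Eventually.of_forall fun z =>
          mul_nonneg (sub_nonneg.2 (hα_range z).2) ENNReal.toReal_nonneg)]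
      refine lintegral_congr fun z => ?_
      rw [ENNReal.ofReal_mul (sub_nonneg.2 (hα_range z).2),
        ENNReal.ofReal_toReal (measure_ne_top (Q z) A)]
    have hR : ∫⁻ z, ENNReal.ofReal (1 - α (S z)) * A.indicator 1 z ∂ρ
        = ENNReal.ofReal (∫ z, (1 - α (S z)) * A.indicator (1 : EuclideanSpace ℝ (Fin n) → ℝ) z ∂ρ) := by
      rw [ofReal_integral_eq_lintegral_ofReal hf2_int
        (Filter.Eventually.of_forall fun z => mul_nonneg (sub_nonneg.2 (hα_range (S z)).2)
          (by by_cases hz : z ∈ A <;> simp [hz]))]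
      refine lintegral_congr fun z => ?_
      rw [ENNReal.ofReal_mul (sub_nonneg.2 (hα_range (S z)).2)]
      by_cases hz : z ∈ A <;> simp [hz]
    rw [hL, hR, hint]
  rw [key1, key2, ← lintegral_add_left (show Measurable fun z => ENNReal.ofReal (α (S z)) * A.indicator 1 z from hαS_meas.ennreal_ofReal.mul hind_meas)]
  have hpt : ∀ z, ENNReal.ofReal (α (S z)) * A.indicator 1 z
      + ENNReal.ofReal (1 - α (S z)) * A.indicator 1 z = A.indicator 1 z := fun z => by
    rw [← add_mul, ← ENNReal.ofReal_add (hα_range (S z)).1 (sub_nonneg.2 (hα_range (S z)).2)]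
    simp
  rw [lintegral_congr hpt, lintegral_indicator_one hA]
end

section
/- Let ρ be the probability measure on ℝⁿ with strictly positive density ρ(z) = exp(−H(z)) with respect to Lebesgue measure. Let Φ : ℝⁿ → ℝⁿ be a C¹ diffeomorphism with everywhere nonvanishing Jacobian determinant, let α₁,…,α_m : ℝⁿ → [0,1] be measurable with α := Πᵢ αᵢ, let 𝓑 = {0,1}^m \ {(0,…,0)}, let (Q_b)_{b∈𝓑} be Markov kernels on ℝⁿ, and define the event kernel Q(z,·) = Σ_{b∈𝓑} [ Πᵢ Ber(bᵢ; 1−αᵢ(z)) / (1 − α(z)) ] Q_b(z,·) wherever α(z) < 1, where Ber(b;p) = p if b = 1 and 1−p if b = 0. Let S : ℝⁿ → ℝⁿ be a measurable map whose pushforward of ρ equals ρ. Assume: (i) for all z, ρ(z) Πᵢ αᵢ(z) = ρ(Φ(z)) Πᵢ αᵢ(S(Φ(z))) |det DΦ(z)|; (ii) for every b ∈ 𝓑 and every bounded measurable f, ∫∫ f(z′) Πᵢ Ber(bᵢ; 1−αᵢ(z)) Q_b(z,dz′) ρ(dz) = ∫ f(z′) Πᵢ Ber(bᵢ; 1−αᵢ(S(z′)))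 ρ(dz′). Then the kernel K(z,·) = α(z) δ_{Φ(z)}(·) + (1 − α(z)) Q(z,·) admits ρ as invariant distribution: ∫ K(z,A) ρ(dz) = ρ(A) for every measurable A. -/
open MeasureTheory ProbabilityTheory Real

/-- sufficient conditions for invariance of a discrete-time local PDMP, whose
acceptance probability factorizes as `α(z) = Πᵢ αᵢ(z)` and whose event kernel is the mixture,
over nonzero Bernoulli indicator vectors `b`, of kernels `Q_b` weighted by the conditional
probabilities `Πᵢ Ber(bᵢ; 1−αᵢ(z)) / (1 − α(z))`. -/
theorem discrete_time_local_pdmp_invariance {n m : ℕ}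
    (H : EuclideanSpace ℝ (Fin n) → ℝ) (hH_meas : Measurable H)
    (ρ : Measure (EuclideanSpace ℝ (Fin n)))
    (hρ : ρ = volume.withDensity (fun z => ENNReal.ofReal (Real.exp (-H z))))
    (hprob : IsProbabilityMeasure ρ)
    (Φ : EuclideanSpace ℝ (Fin n) → EuclideanSpace ℝ (Fin n))
    (hΦ : ContDiff ℝ 1 Φ)
    (Φinv : EuclideanSpace ℝ (Fin n) → EuclideanSpace ℝ (Fin n))
    (hΦinv : ContDiff ℝ 1 Φinv)
    (hleft : Function.LeftInverse Φinv Φ) (hright : Function.RightInverse Φinv Φ)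
    (hjac : ∀ z, LinearMap.det ((fderiv ℝ Φ z).toLinearMap) ≠ 0)
    (α : Fin m → EuclideanSpace ℝ (Fin n) → ℝ) (hα_meas : ∀ i, Measurable (α i))
    (hα_range : ∀ i z, α i z ∈ Set.Icc (0 : ℝ) 1)
    (Qb : (Fin m → Bool) → Kernel (EuclideanSpace ℝ (Fin n)) (EuclideanSpace ℝ (Fin n)))
    [∀ b, IsMarkovKernel (Qb b)]
    (Q : Kernel (EuclideanSpace ℝ (Fin n)) (EuclideanSpace ℝ (Fin n))) [IsMarkovKernel Q]
    (hQmix : ∀ z, (∏ i, α i z) < 1 →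
      (Q z : Measure (EuclideanSpace ℝ (Fin n)))
        = (ENNReal.ofReal (1 - ∏ i, α i z))⁻¹
          • ∑ b ∈ Finset.univ.filter (fun b : Fin m → Bool => b ≠ fun _ => false),
              ENNReal.ofReal (∏ i, if b i then 1 - α i z else α i z)
                • (Qb b z : Measure (EuclideanSpace ℝ (Fin n))))
    (S : EuclideanSpace ℝ (Fin n) → EuclideanSpace ℝ (Fin n)) (hS_meas : Measurable S)
    (hS_pres : Measure.map S ρ = ρ)
    (haccept : ∀ z, Real.exp (-H z) * ∏ i, α i z
      = Real.exp (-H (Φ z)) * (∏ i, α i (S (Φ z)))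
        * |LinearMap.det ((fderiv ℝ Φ z).toLinearMap)|)
    (hQb : ∀ b : Fin m → Bool, b ≠ (fun _ => false) →
      ∀ f : EuclideanSpace ℝ (Fin n) → ℝ, Measurable f → (∃ C, ∀ z, |f z| ≤ C) →
      ∫ z, (∏ i, if b i then 1 - α i z else α i z) * ∫ z', f z' ∂(Qb b z) ∂ρ
        = ∫ z', (∏ i, if b i then 1 - α i (S z') else α i (S z')) * f z' ∂ρ) :
    ∀ A : Set (EuclideanSpace ℝ (Fin n)), MeasurableSet A →
      ∫⁻ z, (ENNReal.ofReal (∏ i, α i z) * Measure.dirac (Φ z) A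
        + ENNReal.ofReal (1 - ∏ i, α i z) * Q z A) ∂ρ = ρ A := by
  intro A hA
  -- notation
  set w : (Fin m → Bool) → EuclideanSpace ℝ (Fin n) → ℝ :=
    fun b z => ∏ i, if b i then 1 - α i z else α i z with hw
  set B : Finset (Fin m → Bool) :=
    Finset.univ.filter (fun b : Fin m → Bool => b ≠ fun _ => false) with hB
  -- basic facts
  have hα0 : ∀ z, 0 ≤ ∏ i, α i z := fun z =>
    Finset.prod_nonneg fun i _ => (hα_range i z).1
  have hα1 : ∀ z, (∏ i, α i z) ≤ 1 :=
    fun z => Finset.prod_le_one (fun i _ => (hα_range i z).1) (fun i _ => (hα_range i z).2)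
  have hw0 : ∀ b z, 0 ≤ w b z := by
    intro b z
    refine Finset.prod_nonneg fun i _ => ?_
    cases hbi : b i <;> simp [sub_nonneg, (hα_range i z).1, (hα_range i z).2]
  have hw1 : ∀ b z, w b z ≤ 1 := by
    intro b z
    refine Finset.prod_le_one (fun i _ => ?_) (fun i _ => ?_)
    · cases hbi : b i <;> simp [sub_nonneg, (hα_range i z).1, (hα_range i z).2]
    · cases hbi : b i <;> simp [sub_le_self_iff, (hα_range i z).1, (hα_range i z).2]
  have hw_meas : ∀ b, Measurable (w b) := by
    intro b
    apply Finset.measurable_prod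
    intro i _
    cases hbi : b i
    · simpa [hbi] using hα_meas i
    · convert (measurable_const (a := (1 : ℝ))).sub (hα_meas i) using 1
      funext z; simp [hbi]
  have hwzero : ∀ b : Fin m → Bool, (fun _ => false) ∉ ({b} : Set _) → True := fun _ _ => trivial
  -- sum of all weights is 1
  have hsum : ∀ z, ∑ b : Fin m → Bool, w b z = 1 := by
    intro z
    have := (Fintype.prod_sum (fun (i : Fin m) (j : Bool) =>
      if j then 1 - α i z else α i z)).symm
    rw [hw]
    refine this.trans ?_
    rw [Finset.prod_eq_one]
    intro i _
    simp [Fintype.sum_bool]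
  have hsumB : ∀ z, ∑ b ∈ B, w b z = 1 - ∏ i, α i z := by
    intro z
    have h := hsum z
    have hsplit : ∑ b : Fin m → Bool, w b z
        = ∑ b ∈ B, w b z + ∑ b ∈ Finset.univ.filter
            (fun b : Fin m → Bool => ¬ b ≠ fun _ => false), w b z :=
      (Finset.sum_filter_add_sum_filter_not _ _ _).symm
    have h2 : ∑ b ∈ Finset.univ.filter
        (fun b : Fin m → Bool => ¬ b ≠ fun _ => false), w b z = ∏ i, α i z := by
      rw [show Finset.univ.filter (fun b : Fin m → Bool => ¬ b ≠ fun _ => false)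
          = {fun _ => false} by ext b; simp]
      simp [hw]
    rw [hsplit, h2] at h
    linarith
  -- if the product is 1 then every weight with b ≠ 0 vanishes
  have hwzero1 : ∀ z, (∏ i, α i z) = 1 → ∀ b ∈ B, w b z = 0 := by
    intro z hz b hb
    have hi : ∀ i, α i z = 1 := by
      intro i
      refine le_antisymm (hα_range i z).2 ?_
      have h1 : (∏ j, α j z) = α i z * ∏ j ∈ Finset.univ.erase i, α j z :=
        (Finset.mul_prod_erase Finset.univ _ (Finset.mem_univ i)).symm
      have h2 : ∏ j ∈ Finset.univ.erase i, α j z ≤ 1 :=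
        Finset.prod_le_one (fun j _ => (hα_range j z).1) (fun j _ => (hα_range j z).2)
      have h3 : α i z * ∏ j ∈ Finset.univ.erase i, α j z ≤ α i z * 1 :=
        mul_le_mul_of_nonneg_left h2 (hα_range i z).1
      nlinarith [hz, h1]
    have : ∃ i, b i = true := by
      by_contra hcon
      push_neg at hcon
      simp only [Bool.not_eq_true] at hcon
      have : b = fun _ => false := funext hcon
      simp [hB, this] at hb
    obtain ⟨i, hi'⟩ := this
    exact Finset.prod_eq_zero (Finset.mem_univ i) (by simp [hi', hi i])
  -- pointwise identity for the event part
  have hpoint : ∀ z, ENNReal.ofReal (1 - ∏ i, α i z) * Q z A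
      = ∑ b ∈ B, ENNReal.ofReal (w b z) * Qb b z A := by
    intro z
    rcases lt_or_ge (∏ i, α i z) 1 with hlt | hge
    · have hne : ENNReal.ofReal (1 - ∏ i, α i z) ≠ 0 := by
        simp [ENNReal.ofReal_eq_zero]; linarith
      rw [hQmix z hlt]
      rw [Measure.smul_apply, Measure.finset_sum_apply]
      simp only [Measure.smul_apply, smul_eq_mul]
      rw [← mul_assoc, ENNReal.mul_inv_cancel hne ENNReal.ofReal_ne_top, one_mul]
    · have heq : (∏ i, α i z) = 1 := le_antisymm (hα1 z) hge
      rw [heq]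
      simp only [sub_self, ENNReal.ofReal_zero, zero_mul]
      refine (Finset.sum_eq_zero fun b hb => ?_).symm
      rw [hwzero1 z heq b hb]
      simp

  have hΦ_meas : Measurable Φ := hΦ.continuous.measurable
  have hαprod_meas : Measurable fun z => ∏ i, α i z :=
    Finset.measurable_prod _ fun i _ => hα_meas i
  have hdens_meas : Measurable fun z => ENNReal.ofReal (Real.exp (-H z)) :=
    ENNReal.measurable_ofReal.comp (Real.measurable_exp.comp hH_meas.neg)
  -- change of variables for the accept term
  have hdet : ∀ z, (fderiv ℝ Φ z).det = LinearMap.det ((fderiv ℝ Φ z).toLinearMap) :=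
    fun z => rfl
  have hΦderiv : ∀ x ∈ (Set.univ : Set (EuclideanSpace ℝ (Fin n))),
      HasFDerivWithinAt Φ (fderiv ℝ Φ x) Set.univ x := fun x _ =>
    ((hΦ.differentiable one_ne_zero).differentiableAt.hasFDerivAt).hasFDerivWithinAt
  have hΦinj : Set.InjOn Φ Set.univ := hleft.injective.injOn
  have himg : Φ '' Set.univ = Set.univ := by
    rw [Set.image_univ]; exact hright.surjective.range_eq
  set g : EuclideanSpace ℝ (Fin n) → ENNReal := fun x =>
    ENNReal.ofReal (Real.exp (-H x) * ∏ i, α i (S x))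
      * A.indicator (fun _ => (1 : ENNReal)) x with hg
  have hcov := lintegral_image_eq_lintegral_abs_det_fderiv_mul volume MeasurableSet.univ
    hΦderiv hΦinj g
  rw [himg, setLIntegral_univ, setLIntegral_univ] at hcov
  have hmeas1 : Measurable fun z => ENNReal.ofReal (∏ i, α i z)
      * A.indicator (fun _ => (1 : ENNReal)) (Φ z) :=
    (ENNReal.measurable_ofReal.comp hαprod_meas).mul
      ((measurable_one.indicator hA).comp hΦ_meas)
  have hmeas2 : Measurable fun z => ENNReal.ofReal (∏ i, α i (S z))
      * A.indicator (fun _ => (1 : ENNReal)) z :=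
    (ENNReal.measurable_ofReal.comp (hαprod_meas.comp hS_meas)).mul
      (measurable_one.indicator hA)
  have hT1 : ∫⁻ z, ENNReal.ofReal (∏ i, α i z)
        * A.indicator (fun _ => (1 : ENNReal)) (Φ z) ∂ρ
      = ∫⁻ z, ENNReal.ofReal (∏ i, α i (S z))
        * A.indicator (fun _ => (1 : ENNReal)) z ∂ρ := by
    rw [hρ, lintegral_withDensity_eq_lintegral_mul volume hdens_meas hmeas1,
        lintegral_withDensity_eq_lintegral_mul volume hdens_meas hmeas2]
    calc ∫⁻ z, ((fun z => ENNReal.ofReal (Real.exp (-H z)))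
          * fun z => ENNReal.ofReal (∏ i, α i z)
            * A.indicator (fun _ => (1 : ENNReal)) (Φ z)) z ∂volume
        = ∫⁻ z, ENNReal.ofReal |(fderiv ℝ Φ z).det| * g (Φ z) ∂volume := by
          refine lintegral_congr fun z => ?_
          simp only [Pi.mul_apply, hg]
          rw [← mul_assoc, ← ENNReal.ofReal_mul (Real.exp_pos _).le, haccept z,
            ← mul_assoc, hdet z, ENNReal.ofReal_mul
              (mul_nonneg (Real.exp_pos _).le (hα0 _))]
          ring
      _ = ∫⁻ x, g x ∂volume := hcov.symm
      _ = ∫⁻ z, ((fun z => ENNReal.ofReal (Real.exp (-H z)))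
            * fun z => ENNReal.ofReal (∏ i, α i (S z))
              * A.indicator (fun _ => (1 : ENNReal)) z) z ∂volume := by
          refine lintegral_congr fun z => ?_
          simp only [Pi.mul_apply, hg]
          rw [ENNReal.ofReal_mul (Real.exp_pos _).le, mul_assoc]
  -- the event-part transport via hQb
  have key : ∀ b ∈ B, ∫⁻ z, ENNReal.ofReal (w b z) * Qb b z A ∂ρ
      = ∫⁻ z, ENNReal.ofReal (w b (S z)) * A.indicator (fun _ => (1 : ENNReal)) z ∂ρ := by
    intro b hb
    have hbne : b ≠ fun _ => false := by simpa [hB] using hb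
    set f : EuclideanSpace ℝ (Fin n) → ℝ := A.indicator 1 with hf
    have hf_meas : Measurable f := measurable_one.indicator hA
    have hf_bd : ∃ C, ∀ z, |f z| ≤ C :=
      ⟨1, fun z => by by_cases hz : z ∈ A <;> simp [hf, hz]⟩
    have h := hQb b hbne f hf_meas hf_bd
    have hfin : ∀ z, ∫ z', f z' ∂(Qb b z) = (Qb b z A).toReal := fun z =>
      integral_indicator_one hA
    simp only [hfin] at h
    have htR : ∀ z, (Qb b z A).toReal ≤ 1 := by
      intro z
      have h1 : Qb b z A ≤ 1 := prob_le_one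
      simpa using ENNReal.toReal_mono ENNReal.one_ne_top h1
    have hg_meas : Measurable fun z => w b z * (Qb b z A).toReal :=
      (hw_meas b).mul ((Qb b).measurable_coe hA).ennreal_toReal
    have hg_int : Integrable (fun z => w b z * (Qb b z A).toReal) ρ := by
      refine Integrable.mono' (integrable_const 1) hg_meas.aestronglyMeasurable ?_
      refine Filter.Eventually.of_forall fun z => ?_
      rw [Real.norm_eq_abs, abs_of_nonneg (mul_nonneg (hw0 b z) ENNReal.toReal_nonneg)]
      calc w b z * (Qb b z A).toReal ≤ 1 * 1 :=
            mul_le_mul (hw1 b z) (htR z) ENNReal.toReal_nonneg zero_le_one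
        _ = 1 := mul_one 1
    have hh_meas : Measurable fun z => w b (S z) * f z :=
      ((hw_meas b).comp hS_meas).mul hf_meas
    have hh_int : Integrable (fun z => w b (S z) * f z) ρ := by
      refine Integrable.mono' (integrable_const 1) hh_meas.aestronglyMeasurable ?_
      refine Filter.Eventually.of_forall fun z => ?_
      rw [Real.norm_eq_abs, abs_mul]
      by_cases hz : z ∈ A
      · simpa [hf, hz, abs_of_nonneg (hw0 b (S z))] using hw1 b (S z)
      · simp [hf, hz]
    have hL : ∫⁻ z, ENNReal.ofReal (w b z) * Qb b z A ∂ρ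
        = ENNReal.ofReal (∫ z, w b z * (Qb b z A).toReal ∂ρ) := by
      rw [ofReal_integral_eq_lintegral_ofReal hg_int
        (Filter.Eventually.of_forall fun z =>
          mul_nonneg (hw0 b z) ENNReal.toReal_nonneg)]
      refine lintegral_congr fun z => ?_
      rw [ENNReal.ofReal_mul (hw0 b z), ENNReal.ofReal_toReal (measure_ne_top _ _)]
    have hR : ∫⁻ z, ENNReal.ofReal (w b (S z)) * A.indicator (fun _ => (1 : ENNReal)) z ∂ρ
        = ENNReal.ofReal (∫ z, w b (S z) * f z ∂ρ) := by
      rw [ofReal_integral_eq_lintegral_ofReal hh_int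
        (Filter.Eventually.of_forall fun z =>
          mul_nonneg (hw0 b (S z)) (by by_cases hz : z ∈ A <;> simp [hf, hz]))]
      refine lintegral_congr fun z => ?_
      by_cases hz : z ∈ A <;> simp [hf, hz, ENNReal.ofReal_mul (hw0 b (S z))]
    rw [hL, hR, h]
  -- measurability of the two parts of the kernel
  have hmeasQ : ∀ b ∈ B, Measurable fun z => ENNReal.ofReal (w b z) * Qb b z A :=
    fun b _ => (ENNReal.measurable_ofReal.comp (hw_meas b)).mul ((Qb b).measurable_coe hA)
  have hmeasWS : ∀ b ∈ B, Measurable fun z =>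
      ENNReal.ofReal (w b (S z)) * A.indicator (fun _ => (1 : ENNReal)) z := fun b _ =>
    (ENNReal.measurable_ofReal.comp ((hw_meas b).comp hS_meas)).mul
      (measurable_one.indicator hA)
  -- assemble
  have hdirac : ∀ z, Measure.dirac (Φ z) A = A.indicator (fun _ => (1 : ENNReal)) (Φ z) :=
    fun z => Measure.dirac_apply' _ hA
  calc ∫⁻ z, (ENNReal.ofReal (∏ i, α i z) * Measure.dirac (Φ z) A
        + ENNReal.ofReal (1 - ∏ i, α i z) * Q z A) ∂ρ
      = ∫⁻ z, (ENNReal.ofReal (∏ i, α i z) * A.indicator (fun _ => (1 : ENNReal)) (Φ z)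
        + ∑ b ∈ B, ENNReal.ofReal (w b z) * Qb b z A) ∂ρ := by
        refine lintegral_congr fun z => ?_
        rw [hdirac z, hpoint z]
    _ = ∫⁻ z, ENNReal.ofReal (∏ i, α i z) * A.indicator (fun _ => (1 : ENNReal)) (Φ z) ∂ρ
        + ∑ b ∈ B, ∫⁻ z, ENNReal.ofReal (w b z) * Qb b z A ∂ρ := by
        rw [lintegral_add_left hmeas1, lintegral_finset_sum _ hmeasQ]
    _ = ∫⁻ z, ENNReal.ofReal (∏ i, α i (S z)) * A.indicator (fun _ => (1 : ENNReal)) z ∂ρ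
        + ∑ b ∈ B, ∫⁻ z, ENNReal.ofReal (w b (S z))
            * A.indicator (fun _ => (1 : ENNReal)) z ∂ρ := by
        rw [hT1]
        exact congrArg _ (Finset.sum_congr rfl key)
    _ = ∫⁻ z, (ENNReal.ofReal (∏ i, α i (S z)) * A.indicator (fun _ => (1 : ENNReal)) z
        + ∑ b ∈ B, ENNReal.ofReal (w b (S z))
            * A.indicator (fun _ => (1 : ENNReal)) z) ∂ρ := by
        rw [lintegral_add_left hmeas2, lintegral_finset_sum _ hmeasWS]
    _ = ∫⁻ z, A.indicator (fun _ => (1 : ENNReal)) z ∂ρ := by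
        refine lintegral_congr fun z => ?_
        rw [← Finset.sum_mul, ← add_mul]
        have hcoef : ENNReal.ofReal (∏ i, α i (S z))
            + ∑ b ∈ B, ENNReal.ofReal (w b (S z)) = 1 := by
          rw [← ENNReal.ofReal_sum_of_nonneg fun b _ => hw0 b (S z), hsumB (S z),
            ← ENNReal.ofReal_add (hα0 (S z)) (by linarith [hα1 (S z)]),
            add_sub_cancel, ENNReal.ofReal_one]
        rw [hcoef, one_mul]
    _ = ρ A := lintegral_indicator_one hA
end

section
/- Let ν be a strictly positive probability density on ℝⁿ with respect to Lebesgue measure, and let S : ℝⁿ → ℝⁿ be a C¹ involution (S ∘ S = id) with |det DS(z)| = 1 for all z and ν(S(z)) = ν(z) for all z. Let Ψ : ℝⁿ → ℝⁿ be a C¹ diffeomorphism satisfying Ψ⁻¹ = S ∘ Ψ ∘ S, and define the acceptance probability β(z) = min{1, ν(Ψ(z)) |det DΨ(z)| / ν(z)}. Then the kernel T(z,·) = β(z) δ_{Ψ(z)}(·) + (1 − β(z)) δ_{S(z)}(·) leaves ν invariant: for every measurable set A, ∫ T(z,A) ν(z) dz = ∫_A ν(z) dz. -/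
open MeasureTheory Real

open scoped ENNReal

/-- Absolute Jacobian determinant. -/
noncomputable def gmhJac {n : ℕ}
    (f : EuclideanSpace ℝ (Fin n) → EuclideanSpace ℝ (Fin n))
    (z : EuclideanSpace ℝ (Fin n)) : ℝ :=
  |LinearMap.det ((fderiv ℝ f z).toLinearMap)|

lemma gmhJac_nonneg {n : ℕ} (f : EuclideanSpace ℝ (Fin n) → EuclideanSpace ℝ (Fin n))
    (z : EuclideanSpace ℝ (Fin n)) : 0 ≤ gmhJac f z := abs_nonneg _

lemma gmhJac_comp {n : ℕ}
    (f g : EuclideanSpace ℝ (Fin n) → EuclideanSpace ℝ (Fin n))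
    (hf : Differentiable ℝ f) (hg : Differentiable ℝ g)
    (z : EuclideanSpace ℝ (Fin n)) :
    gmhJac (f ∘ g) z = gmhJac f (g z) * gmhJac g z := by
  unfold gmhJac
  rw [fderiv_comp z (hf (g z)) (hg z)]
  simp [ContinuousLinearMap.coe_comp, LinearMap.det_comp, abs_mul]

lemma gmhJac_measurable {n : ℕ}
    (f : EuclideanSpace ℝ (Fin n) → EuclideanSpace ℝ (Fin n))
    (hf : ContDiff ℝ 1 f) : Measurable (gmhJac f) := by
  have h1 : Continuous fun z => ((fderiv ℝ f z).det : ℝ) :=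
    ContinuousLinearMap.continuous_det.comp (hf.continuous_fderiv one_ne_zero)
  exact (continuous_abs.comp h1).measurable

/-- Global change-of-variables for `lintegral` for a `C¹` bijection. -/
lemma gmh_cov {n : ℕ}
    (f : EuclideanSpace ℝ (Fin n) → EuclideanSpace ℝ (Fin n))
    (hf : ContDiff ℝ 1 f) (hinj : Function.Injective f)
    (hsurj : Function.Surjective f) (g : EuclideanSpace ℝ (Fin n) → ℝ≥0∞) :
    ∫⁻ z, ENNReal.ofReal (gmhJac f z) * g (f z) = ∫⁻ w, g w := by
  have h1 := lintegral_image_eq_lintegral_abs_det_fderiv_mul (μ := volume)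
    (MeasurableSet.univ)
    (f' := fun x => fderiv ℝ f x)
    (fun x _ => ((hf.differentiable one_ne_zero) x).hasFDerivAt.hasFDerivWithinAt)
    (hinj.injOn) g
  have himg : f '' Set.univ = Set.univ := by
    rw [Set.image_univ]; exact hsurj.range_eq
  rw [himg, setLIntegral_univ, setLIntegral_univ] at h1
  exact h1.symm

/-- the generalized Metropolis–Hastings kernel with deterministic proposal `Ψ`
satisfying `Ψ⁻¹ = S ∘ Ψ ∘ S`, acceptance probability
`β(z) = min{1, ν(Ψ z) |det DΨ(z)| / ν(z)}` and rejection move `z ↦ S(z)` leaves `ν`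
invariant. -/
theorem gmh_deterministic_proposal_invariance {n : ℕ}
    (ν : EuclideanSpace ℝ (Fin n) → ℝ) (hν_meas : Measurable ν)
    (hν_pos : ∀ z, 0 < ν z) (hν_prob : ∫ z, ν z = 1)
    (S : EuclideanSpace ℝ (Fin n) → EuclideanSpace ℝ (Fin n))
    (hS : ContDiff ℝ 1 S) (hS_invol : S ∘ S = id)
    (hS_jac : ∀ z, |LinearMap.det ((fderiv ℝ S z).toLinearMap)| = 1)
    (hS_ν : ∀ z, ν (S z) = ν z)
    (Ψ : EuclideanSpace ℝ (Fin n) → EuclideanSpace ℝ (Fin n))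
    (hΨ : ContDiff ℝ 1 Ψ)
    (Ψinv : EuclideanSpace ℝ (Fin n) → EuclideanSpace ℝ (Fin n))
    (hΨinv : ContDiff ℝ 1 Ψinv)
    (hleft : Function.LeftInverse Ψinv Ψ) (hright : Function.RightInverse Ψinv Ψ)
    (hΨinv_eq : Ψinv = S ∘ Ψ ∘ S)
    (β : EuclideanSpace ℝ (Fin n) → ℝ)
    (hβ : ∀ z, β z
      = min 1 (ν (Ψ z) * |LinearMap.det ((fderiv ℝ Ψ z).toLinearMap)| / ν z)) :
    ∀ A : Set (EuclideanSpace ℝ (Fin n)), MeasurableSet A →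
      ∫⁻ z, (ENNReal.ofReal (β z) * Measure.dirac (Ψ z) A
          + ENNReal.ofReal (1 - β z) * Measure.dirac (S z) A)
          * ENNReal.ofReal (ν z)
        = ∫⁻ z in A, ENNReal.ofReal (ν z) := by
  intro A hA
  classical
  have hΨd : Differentiable ℝ Ψ := hΨ.differentiable one_ne_zero
  have hSd : Differentiable ℝ S := hS.differentiable one_ne_zero
  have hΨinvd : Differentiable ℝ Ψinv := hΨinv.differentiable one_ne_zero
  have hSS : ∀ x, S (S x) = x := fun x => congrFun hS_invol x
  -- Jacobian notation
  set J : EuclideanSpace ℝ (Fin n) → ℝ := gmhJac Ψ with hJdef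
  set Jinv : EuclideanSpace ℝ (Fin n) → ℝ := gmhJac Ψinv with hJinvdef
  have hβ' : ∀ z, β z = min 1 (ν (Ψ z) * J z / ν z) := fun z => hβ z
  have hSjac : ∀ z, gmhJac S z = 1 := fun z => hS_jac z
  -- J (Ψinv w) * Jinv w = 1
  have hJJ : ∀ w, J (Ψinv w) * Jinv w = 1 := by
    intro w
    have h1 : Ψ ∘ Ψinv = id := funext hright
    have h2 := gmhJac_comp Ψ Ψinv hΨd hΨinvd w
    rw [h1] at h2
    have h3 : gmhJac (id : EuclideanSpace ℝ (Fin n) → EuclideanSpace ℝ (Fin n)) w = 1 := by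
      unfold gmhJac
      simp [fderiv_id]
    rw [h3] at h2
    exact h2.symm
  -- Ψ ∘ S = S ∘ Ψinv
  have hΨS : ∀ w, Ψ (S w) = S (Ψinv w) := by
    intro w
    have h : S (Ψinv w) = Ψ (S w) := by
      rw [hΨinv_eq]; exact hSS _
    exact h.symm
  -- Jinv w = J (S w)
  have hJinvS : ∀ w, Jinv w = J (S w) := by
    intro w
    have h1 : Ψinv = S ∘ (Ψ ∘ S) := hΨinv_eq
    have h2 : Jinv w = gmhJac (S ∘ (Ψ ∘ S)) w := by rw [hJinvdef, h1]
    rw [h2, gmhJac_comp S (Ψ ∘ S) hSd (hΨd.comp hSd) w,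
      gmhJac_comp Ψ S hΨd hSd w, hSjac, hSjac, one_mul, mul_one]
  -- pointwise algebra
  have hβν : ∀ z, β z * ν z = min (ν z) (ν (Ψ z) * J z) := by
    intro z
    rw [hβ' z, min_mul_of_nonneg _ _ (hν_pos z).le, one_mul,
      div_mul_cancel₀ _ (hν_pos z).ne']
  have hβ0 : ∀ z, 0 ≤ β z := by
    intro z
    rw [hβ' z]
    exact le_min zero_le_one
      (div_nonneg (mul_nonneg (hν_pos _).le (gmhJac_nonneg Ψ z)) (hν_pos z).le)
  have hβ1 : ∀ z, β z ≤ 1 := fun z => by rw [hβ' z]; exact min_le_left _ _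
  have hkey1 : ∀ w, min (ν (Ψinv w)) (ν w * J (Ψinv w)) * Jinv w
      = min (ν w) (ν (Ψinv w) * Jinv w) := by
    intro w
    rw [min_mul_of_nonneg _ _ (gmhJac_nonneg Ψinv w), mul_assoc, hJJ w, mul_one]
    exact min_comm _ _
  have hkey2 : ∀ w, β (S w) * ν (S w) = min (ν w) (ν (Ψinv w) * Jinv w) := by
    intro w
    rw [hβν (S w), hS_ν w, hΨS w, hS_ν (Ψinv w), ← hJinvS w]
  -- measurability
  have hJm : Measurable J := gmhJac_measurable Ψ hΨ
  have hβmeas : Measurable β := by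
    have h : Measurable fun z => min 1 (ν (Ψ z) * J z / ν z) :=
      measurable_const.min (((hν_meas.comp hΨ.continuous.measurable).mul hJm).div hν_meas)
    have hβeq : β = fun z => min 1 (ν (Ψ z) * J z / ν z) := funext hβ'
    rw [hβeq]; exact h
  -- indicator function
  set χ : EuclideanSpace ℝ (Fin n) → ℝ≥0∞ := A.indicator 1 with hχdef
  have hχm : Measurable χ := measurable_one.indicator hA
  have hdirac1 : ∀ z, Measure.dirac (Ψ z) A = χ (Ψ z) :=
    fun z => Measure.dirac_apply' _ hA
  have hdirac2 : ∀ z, Measure.dirac (S z) A = χ (S z) :=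
    fun z => Measure.dirac_apply' _ hA
  have hm1 : Measurable fun z => χ (Ψ z) * ENNReal.ofReal (β z * ν z) :=
    (hχm.comp hΨ.continuous.measurable).mul
      (ENNReal.measurable_ofReal.comp (hβmeas.mul hν_meas))
  -- split the integral
  have hsplit : (∫⁻ z, (ENNReal.ofReal (β z) * Measure.dirac (Ψ z) A
          + ENNReal.ofReal (1 - β z) * Measure.dirac (S z) A) * ENNReal.ofReal (ν z))
      = (∫⁻ z, χ (Ψ z) * ENNReal.ofReal (β z * ν z))
        + ∫⁻ z, χ (S z) * ENNReal.ofReal ((1 - β z) * ν z) := by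
    rw [← lintegral_add_left hm1]
    refine lintegral_congr fun z => ?_
    rw [hdirac1 z, hdirac2 z, add_mul,
      ENNReal.ofReal_mul (hβ0 z), ENNReal.ofReal_mul (sub_nonneg.2 (hβ1 z))]
    ring
  -- first integral: change of variables z = Ψinv w
  have hI1 : (∫⁻ z, χ (Ψ z) * ENNReal.ofReal (β z * ν z))
      = ∫⁻ w, χ w * ENNReal.ofReal (min (ν w) (ν (Ψinv w) * Jinv w)) := by
    have hcov := gmh_cov Ψinv hΨinv
      (Function.LeftInverse.injective hright) hleft.surjective
      (fun z => χ (Ψ z) * ENNReal.ofReal (β z * ν z))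
    rw [← hcov]
    refine lintegral_congr fun w => ?_
    rw [hright w, hβν (Ψinv w), hright w, ← mul_assoc,
      mul_comm (ENNReal.ofReal (Jinv w)) (χ w), mul_assoc,
      ← ENNReal.ofReal_mul (gmhJac_nonneg Ψinv w),
      mul_comm (Jinv w), hkey1 w]
  -- second integral: change of variables z = S w
  have hI2 : (∫⁻ z, χ (S z) * ENNReal.ofReal ((1 - β z) * ν z))
      = ∫⁻ w, χ w * ENNReal.ofReal ((1 - β (S w)) * ν (S w)) := by
    have hSinj : Function.Injective S := by
      intro a b hab
      have := congrArg S hab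
      rwa [hSS, hSS] at this
    have hSsurj : Function.Surjective S := fun w => ⟨S w, hSS w⟩
    have hcov := gmh_cov S hS hSinj hSsurj
      (fun w => χ w * ENNReal.ofReal ((1 - β (S w)) * ν (S w)))
    rw [← hcov]
    refine lintegral_congr fun z => ?_
    rw [hSjac z, ENNReal.ofReal_one, one_mul, hSS z]
  -- combine
  have hm2 : Measurable fun w => χ w * ENNReal.ofReal (min (ν w) (ν (Ψinv w) * Jinv w)) :=
    hχm.mul (Measurable.ennreal_ofReal (hν_meas.min
      ((hν_meas.comp hΨinv.continuous.measurable).mul (gmhJac_measurable Ψinv hΨinv))))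
  rw [hsplit, hI1, hI2, ← lintegral_add_left hm2]
  rw [← lintegral_indicator hA (fun z => ENNReal.ofReal (ν z))]
  refine lintegral_congr fun w => ?_
  have hmin_nonneg : 0 ≤ min (ν w) (ν (Ψinv w) * Jinv w) :=
    le_min (hν_pos w).le (mul_nonneg (hν_pos _).le (gmhJac_nonneg Ψinv w))
  have hmin_le : min (ν w) (ν (Ψinv w) * Jinv w) ≤ ν w := min_le_left _ _
  have hsum : (1 - β (S w)) * ν (S w) = ν w - min (ν w) (ν (Ψinv w) * Jinv w) := by
    rw [sub_mul, one_mul, hkey2 w, hS_ν w]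
  rw [hsum, ← mul_add, ← ENNReal.ofReal_add hmin_nonneg (sub_nonneg.2 hmin_le),
    add_sub_cancel]
  by_cases hw : w ∈ A
  · simp [hχdef, Set.indicator_of_mem hw]
  · simp [hχdef, Set.indicator_of_notMem hw]
end

section
/- Let π be a probability density on ℝᵈ, let ψ be a probability measure on ℝᵈ invariant under v ↦ −v, let ρ = π ⊗ ψ on ℝᵈ × ℝᵈ, let λ : ℝᵈ × ℝᵈ → [0,∞) be measurable with ∫ λ dρ < ∞, and let (Q_x)_{x∈ℝᵈ} be a jointly measurable family of Markov kernels on ℝᵈ satisfying, for every x and every measurable set B ⊆ ℝᵈ, ∫ λ(x,v) Q_x(v,B) ψ(dv) = ∫_B λ(x,−v′) ψ(dv′). Define the event kernel Q((x,v), ·) = δ_x ⊗ Q_x(v,·) and S(x,v) = (x,−v). Then for every bounded measurable f, ∫∫ f(z′) λ(z) Q(z,dz′) ρ(dz) = ∫ f(z′) λ(S(z′)) ρ(dz′); that is, Q satisfies the event-kernel invariance condition ∫ ρ(dz) λ(z) Q(z,dz′) = ρ(S⁻¹(dz′)) λ(S(z′)) for randomized bounces. -/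
open MeasureTheory ProbabilityTheory
open scoped ENNReal NNReal

/-- for randomized bounces, if each velocity kernel `Q_x` satisfies
`∫ λ(x,v) Q_x(v,B) ψ(dv) = ∫_B λ(x,−v′) ψ(dv′)`, then the event kernel
`Q((x,v),·) = δ_x ⊗ Q_x(v,·)` satisfies the event-kernel invariance condition
`∫ ρ(dz) λ(z) Q(z,dz′) = ρ(S⁻¹(dz′)) λ(S(z′))` for `ρ = π ⊗ ψ` and `S(x,v) = (x,−v)`. -/
theorem randomized_bounce_event_kernel_invariance {d : ℕ}
    (π : EuclideanSpace ℝ (Fin d) → ℝ) (hπ_meas : Measurable π)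
    (hπ_nonneg : ∀ x, 0 ≤ π x) (hπ_prob : ∫ x, π x = 1)
    (ψ : Measure (EuclideanSpace ℝ (Fin d))) [IsProbabilityMeasure ψ]
    (hψ_symm : Measure.map (fun v => -v) ψ = ψ)
    (ρ : Measure (EuclideanSpace ℝ (Fin d) × EuclideanSpace ℝ (Fin d)))
    (hρ : ρ = (volume.withDensity (fun x => ENNReal.ofReal (π x))).prod ψ)
    (lam : EuclideanSpace ℝ (Fin d) × EuclideanSpace ℝ (Fin d) → ℝ)
    (hlam_meas : Measurable lam) (hlam_nonneg : ∀ z, 0 ≤ lam z)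
    (hlam_int : Integrable lam ρ)
    (Qx : Kernel (EuclideanSpace ℝ (Fin d) × EuclideanSpace ℝ (Fin d))
      (EuclideanSpace ℝ (Fin d)))
    [IsMarkovKernel Qx]
    (hQx : ∀ x : EuclideanSpace ℝ (Fin d), ∀ B : Set (EuclideanSpace ℝ (Fin d)),
      MeasurableSet B →
      ∫⁻ v, ENNReal.ofReal (lam (x, v)) * Qx (x, v) B ∂ψ
        = ∫⁻ v' in B, ENNReal.ofReal (lam (x, -v')) ∂ψ) :
    ∀ f : EuclideanSpace ℝ (Fin d) × EuclideanSpace ℝ (Fin d) → ℝ,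
      Measurable f → (∃ C, ∀ z, |f z| ≤ C) →
      ∫ z, lam z * ∫ z', f z' ∂((Measure.dirac z.1).prod (Qx z)) ∂ρ
        = ∫ z', lam (z'.1, -z'.2) * f z' ∂ρ := by
  intro f hf_meas hf_bdd
  obtain ⟨C, hC⟩ := hf_bdd
  subst hρ
  -- π is integrable (otherwise its integral would be 0, not 1)
  have hπ_int : Integrable π volume := by
    by_contra h
    rw [integral_undef h] at hπ_prob
    norm_num at hπ_prob
  set μπ : Measure (EuclideanSpace ℝ (Fin d)) :=
    volume.withDensity (fun x => ENNReal.ofReal (π x)) with hμπ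
  haveI : IsProbabilityMeasure μπ := by
    constructor
    rw [hμπ, withDensity_apply _ MeasurableSet.univ, setLIntegral_univ,
      ← ofReal_integral_eq_lintegral_ofReal hπ_int (ae_of_all _ hπ_nonneg), hπ_prob,
      ENNReal.ofReal_one]
  set ρ' : Measure (EuclideanSpace ℝ (Fin d) × EuclideanSpace ℝ (Fin d)) := μπ.prod ψ with hρ'
  -- the event kernel
  set κ : Kernel (EuclideanSpace ℝ (Fin d) × EuclideanSpace ℝ (Fin d))
      (EuclideanSpace ℝ (Fin d) × EuclideanSpace ℝ (Fin d)) :=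
    (Kernel.deterministic (Prod.fst :
        EuclideanSpace ℝ (Fin d) × EuclideanSpace ℝ (Fin d) → EuclideanSpace ℝ (Fin d))
      measurable_fst) ×ₖ Qx with hκ
  have hκ_apply : ∀ z : EuclideanSpace ℝ (Fin d) × EuclideanSpace ℝ (Fin d),
      κ z = (Measure.dirac z.1).prod (Qx z) := by
    intro z
    rw [hκ, Kernel.prod_apply, Kernel.deterministic_apply]
  -- the two densified measures
  set μρ : Measure (EuclideanSpace ℝ (Fin d) × EuclideanSpace ℝ (Fin d)) :=
    ρ'.withDensity (fun z => ENNReal.ofReal (lam z)) with hμρ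
  have hSlam_meas : Measurable fun z : EuclideanSpace ℝ (Fin d) × EuclideanSpace ℝ (Fin d) =>
      lam (z.1, -z.2) :=
    hlam_meas.comp (measurable_fst.prodMk measurable_snd.neg)
  set N : Measure (EuclideanSpace ℝ (Fin d) × EuclideanSpace ℝ (Fin d)) :=
    ρ'.withDensity (fun z => ENNReal.ofReal (lam (z.1, -z.2))) with hN
  haveI hμρ_fin : IsFiniteMeasure μρ :=
    isFiniteMeasure_withDensity_ofReal hlam_int.hasFiniteIntegral
  -- key rectangle computation
  have hrect : ∀ A B : Set (EuclideanSpace ℝ (Fin d)), MeasurableSet A → MeasurableSet B →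
      (μρ ⊗ₘ κ).snd (A ×ˢ B) = N (A ×ˢ B) := by
    intro A B hA hB
    have hmeas_QB : Measurable fun z : EuclideanSpace ℝ (Fin d) × EuclideanSpace ℝ (Fin d) =>
        Qx z B := Qx.measurable_coe hB
    have hmeas_ind : Measurable fun z : EuclideanSpace ℝ (Fin d) × EuclideanSpace ℝ (Fin d) =>
        Set.indicator A (fun _ => (1 : ℝ≥0∞)) z.1 :=
      (measurable_const.indicator hA).comp measurable_fst
    have hκ_rect : ∀ z : EuclideanSpace ℝ (Fin d) × EuclideanSpace ℝ (Fin d),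
        κ z (A ×ˢ B) = Set.indicator A (fun _ => (1 : ℝ≥0∞)) z.1 * Qx z B := by
      intro z
      rw [hκ_apply z, Measure.prod_prod, Measure.dirac_apply' _ hA]
      rfl
    have hsnd : (μρ ⊗ₘ κ).snd (A ×ˢ B) = ∫⁻ z, κ z (A ×ˢ B) ∂μρ := by
      rw [Measure.snd_apply (hA.prod hB),
        Measure.compProd_apply (measurable_snd (hA.prod hB))]
      rfl
    rw [hsnd]
    have hstep1 : ∫⁻ z, κ z (A ×ˢ B) ∂μρ
        = ∫⁻ z, ENNReal.ofReal (lam z) *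
            (Set.indicator A (fun _ => (1 : ℝ≥0∞)) z.1 * Qx z B) ∂ρ' := by
      rw [hμρ, lintegral_withDensity_eq_lintegral_mul _ hlam_meas.ennreal_ofReal
        (κ.measurable_coe (hA.prod hB))]
      simp only [Pi.mul_apply]
      exact lintegral_congr fun z => by rw [hκ_rect z]
    rw [hstep1]
    have hmeas_int : Measurable fun z : EuclideanSpace ℝ (Fin d) × EuclideanSpace ℝ (Fin d) =>
        ENNReal.ofReal (lam z) * (Set.indicator A (fun _ => (1 : ℝ≥0∞)) z.1 * Qx z B) :=
      hlam_meas.ennreal_ofReal.mul (hmeas_ind.mul hmeas_QB)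
    rw [hρ', lintegral_prod _ hmeas_int.aemeasurable]
    have hinner : ∀ x : EuclideanSpace ℝ (Fin d),
        ∫⁻ v, ENNReal.ofReal (lam (x, v)) *
            (Set.indicator A (fun _ => (1 : ℝ≥0∞)) x * Qx (x, v) B) ∂ψ
          = Set.indicator A
              (fun x => ∫⁻ v' in B, ENNReal.ofReal (lam (x, -v')) ∂ψ) x := by
      intro x
      by_cases hx : x ∈ A
      · simp only [Set.indicator_of_mem hx, one_mul]
        exact hQx x B hB
      · simp [Set.indicator_of_notMem hx]
    rw [lintegral_congr hinner]
    -- now the right-hand side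
    rw [hN, withDensity_apply _ (hA.prod hB), ← Measure.prod_restrict,
      lintegral_prod _ hSlam_meas.ennreal_ofReal.aemeasurable,
      ← lintegral_indicator hA]
  -- the two measures agree
  have hM : (μρ ⊗ₘ κ).snd = N := by
    refine ext_of_generate_finite _ generateFrom_prod.symm isPiSystem_prod ?_ ?_
    · rintro s ⟨A, hA, B, hB, rfl⟩
      exact hrect A B hA hB
    · rw [← Set.univ_prod_univ]
      exact hrect _ _ MeasurableSet.univ MeasurableSet.univ
  -- Bochner integral manipulations
  have hint : Integrable
      (fun p : (EuclideanSpace ℝ (Fin d) × EuclideanSpace ℝ (Fin d)) ×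
        (EuclideanSpace ℝ (Fin d) × EuclideanSpace ℝ (Fin d)) => f p.2) (μρ ⊗ₘ κ) := by
    refine Integrable.mono' (integrable_const C)
      ((hf_meas.comp measurable_snd).aestronglyMeasurable) (ae_of_all _ fun p => ?_)
    simpa [Real.norm_eq_abs] using hC p.2
  have h1 : ∫ z, lam z * ∫ z', f z' ∂((Measure.dirac z.1).prod (Qx z)) ∂ρ'
      = ∫ z, ∫ z', f z' ∂(κ z) ∂μρ := by
    have hrw : μρ = ρ'.withDensity (fun z => ((lam z).toNNReal : ℝ≥0∞)) := rfl
    rw [hrw, integral_withDensity_eq_integral_smul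
      (f := fun z => (lam z).toNNReal) (measurable_real_toNNReal.comp hlam_meas)]
    refine integral_congr_ae (ae_of_all _ fun z => ?_)
    beta_reduce
    rw [hκ_apply z, NNReal.smul_def, smul_eq_mul, Real.coe_toNNReal _ (hlam_nonneg z)]
  have h2 : ∫ z, ∫ z', f z' ∂(κ z) ∂μρ = ∫ p, f p.2 ∂(μρ ⊗ₘ κ) :=
    (Measure.integral_compProd hint).symm
  have h3 : ∫ p, f p.2 ∂(μρ ⊗ₘ κ) = ∫ y, f y ∂((μρ ⊗ₘ κ).snd) := by
    rw [Measure.snd, integral_map measurable_snd.aemeasurable hf_meas.aestronglyMeasurable]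
  have h4 : ∫ y, f y ∂N = ∫ z', lam (z'.1, -z'.2) * f z' ∂ρ' := by
    have hrw : N = ρ'.withDensity (fun z => ((lam (z.1, -z.2)).toNNReal : ℝ≥0∞)) := rfl
    rw [hrw, integral_withDensity_eq_integral_smul
      (f := fun z : EuclideanSpace ℝ (Fin d) × EuclideanSpace ℝ (Fin d) => (lam (z.1, -z.2)).toNNReal) (measurable_real_toNNReal.comp hSlam_meas)]
    refine integral_congr_ae (ae_of_all _ fun z => ?_)
    beta_reduce
    rw [NNReal.smul_def, smul_eq_mul, Real.coe_toNNReal _ (hlam_nonneg _)]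
  rw [h1, h2, h3, hM, h4]
end

section
/- Let (Ω, 𝒢, μ) be a measure space and let (ω,z) ↦ H_ω(z) be jointly measurable on Ω × ℝⁿ such that for each z the function ω ↦ H_ω(z) is μ-integrable, and define ρ(z) = exp(−∫ H_ω(z) μ(dω)). Let q : ℝⁿ × ℝⁿ → [0,∞) be a symmetric proposal density, q(z,z′) = q(z′,z), and define the acceptance probability a(z,z′) = exp(−∫ [H_ω(z′) − H_ω(z)]₊ μ(dω)), assuming ω ↦ [H_ω(z′) − H_ω(z)]₊ is μ-integrable for all z, z′. Then detailed balance holds: ρ(z) q(z,z′) a(z,z′) = ρ(z′) q(z′,z) a(z′,z) for all z, z′; hence the noisy Metropolis–Hastings kernel that proposes z* ∼ q(·|z) and accepts it with probability a(z,z*) is reversible with respect to the measure with density ρ. -/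
open MeasureTheory Real

/-- detailed balance for noisy Metropolis–Hastings with target
`ρ(z) = exp(−∫ H_ω(z) μ(dω))`, symmetric proposal density `q`, and acceptance probability
`a(z,z′) = exp(−∫ [H_ω(z′) − H_ω(z)]₊ μ(dω))`:
`ρ(z) q(z,z′) a(z,z′) = ρ(z′) q(z′,z) a(z′,z)` for all `z, z′`. -/
theorem noisy_mh_detailed_balance {n : ℕ}
    {Ω : Type*} [MeasurableSpace Ω] (μ : Measure Ω)
    (H : Ω → EuclideanSpace ℝ (Fin n) → ℝ)
    (hH_meas : Measurable (Function.uncurry H))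
    (hH_int : ∀ z, Integrable (fun ω => H ω z) μ)
    (hpos_int : ∀ z z', Integrable (fun ω => max (H ω z' - H ω z) 0) μ)
    (q : EuclideanSpace ℝ (Fin n) → EuclideanSpace ℝ (Fin n) → ℝ)
    (hq_nonneg : ∀ z z', 0 ≤ q z z')
    (hq_symm : ∀ z z', q z z' = q z' z) :
    ∀ z z' : EuclideanSpace ℝ (Fin n),
      Real.exp (-∫ ω, H ω z ∂μ) * q z z'
          * Real.exp (-∫ ω, max (H ω z' - H ω z) 0 ∂μ)
        = Real.exp (-∫ ω, H ω z' ∂μ) * q z' z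
          * Real.exp (-∫ ω, max (H ω z - H ω z') 0 ∂μ) := by
  intro z z'
  have key : ∫ ω, H ω z ∂μ + ∫ ω, max (H ω z' - H ω z) 0 ∂μ
      = ∫ ω, H ω z' ∂μ + ∫ ω, max (H ω z - H ω z') 0 ∂μ := by
    rw [← integral_add (hH_int z) (hpos_int z z'),
        ← integral_add (hH_int z') (hpos_int z' z)]
    apply integral_congr_ae
    filter_upwards with ω
    rcases le_total (H ω z) (H ω z') with h | h
    · rw [max_eq_left (by linarith), max_eq_right (by linarith)]; ring
    · rw [max_eq_right (by linarith), max_eq_left (by linarith)]; ring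
  rw [hq_symm]
  rw [mul_comm _ (q z' z), mul_comm _ (q z' z), mul_assoc, mul_assoc,
      ← Real.exp_add, ← Real.exp_add]
  rw [show -∫ ω, H ω z ∂μ + -∫ ω, max (H ω z' - H ω z) 0 ∂μ
      = -∫ ω, H ω z' ∂μ + -∫ ω, max (H ω z - H ω z') 0 ∂μ from by linarith]
end

section
/- Let π : ℝᵈ → ℝ be twice continuously differentiable, let x, v ∈ ℝᵈ, let w ∈ ℝᵈ be nonzero with ∇π(x) = c·w for some scalar c, and let Rv = v − 2 (⟨w,v⟩/|w|²) w be the reflection of v with respect to w. Then for every ε > 0, |π(x − εRv) − π(x + εv)| ≤ ε² |v|² · sup{ ‖Hess π(y)‖ : |y − x| ≤ ε|v| }, where ‖·‖ denotes the operator norm of the Hessian matrix. -/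
open scoped RealInnerProductSpace
open Metric

/-- second-order cancellation for the bounce move. If `∇π(x)` is parallel to
the reflection direction `w`, then the first-order Taylor terms of `π(x − εRv)` and
`π(x + εv)` cancel, giving the bound
`|π(x − εRv) − π(x + εv)| ≤ ε² |v|² sup{‖Hess π(y)‖ : |y − x| ≤ ε|v|}`,
where the Hessian norm is the norm of the second iterated derivative. -/
theorem bounce_flip_second_order_bound {d : ℕ}
    (π : EuclideanSpace ℝ (Fin d) → ℝ) (hπ : ContDiff ℝ 2 π)
    (x v w : EuclideanSpace ℝ (Fin d)) (hw : w ≠ 0)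
    (c : ℝ) (hgrad : gradient π x = c • w)
    (Rv : EuclideanSpace ℝ (Fin d))
    (hRv : Rv = v - (2 * ⟪w, v⟫ / ‖w‖ ^ 2) • w) :
    ∀ ε : ℝ, 0 < ε →
      |π (x - ε • Rv) - π (x + ε • v)|
        ≤ ε ^ 2 * ‖v‖ ^ 2
          * sSup ((fun y => ‖iteratedFDeriv ℝ 2 π y‖) '' Metric.closedBall x (ε * ‖v‖)) := by
  intro ε hε
  set M := sSup ((fun y => ‖iteratedFDeriv ℝ 2 π y‖) '' Metric.closedBall x (ε * ‖v‖)) with hM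
  have hwn : ‖w‖ ≠ 0 := norm_ne_zero_iff.mpr hw
  -- ⟪w, Rv⟫ = -⟪w, v⟫
  have hinner : ⟪w, Rv⟫ = -⟪w, v⟫ := by
    rw [hRv, inner_sub_right, real_inner_smul_right, real_inner_self_eq_norm_sq]
    field_simp
    ring
  -- ‖Rv‖ = ‖v‖
  have hnormRv : ‖Rv‖ = ‖v‖ := by
    have hww : ⟪w, w⟫ = ‖w‖ ^ 2 := real_inner_self_eq_norm_sq w
    have expand : ⟪Rv, Rv⟫ = ⟪v, v⟫ - 2 * (2 * ⟪w, v⟫ / ‖w‖ ^ 2) * ⟪w, v⟫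
        + (2 * ⟪w, v⟫ / ‖w‖ ^ 2) ^ 2 * ‖w‖ ^ 2 := by
      rw [hRv]
      rw [inner_sub_left, inner_sub_right, inner_sub_right, real_inner_smul_left,
        real_inner_smul_left, real_inner_smul_right, real_inner_smul_right, hww,
        real_inner_comm v w]
      ring
    have h4 : (2 * ⟪w, v⟫ / ‖w‖ ^ 2) ^ 2 * ‖w‖ ^ 2 = 2 * (2 * ⟪w, v⟫ / ‖w‖ ^ 2) * ⟪w, v⟫ := by
      have hw2 : ‖w‖ ^ 2 ≠ 0 := pow_ne_zero 2 hwn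
      field_simp
    have h2 : ⟪Rv, Rv⟫ = ⟪v, v⟫ := by rw [expand, h4]; ring
    rw [real_inner_self_eq_norm_sq, real_inner_self_eq_norm_sq] at h2
    nlinarith [norm_nonneg Rv, norm_nonneg v]
  -- differentiability
  have hdiff : Differentiable ℝ π := hπ.differentiable two_ne_zero
  -- bound on Hessian sup
  have hr0 : 0 ≤ ε * ‖v‖ := by positivity
  have hcont : Continuous fun y => ‖iteratedFDeriv ℝ 2 π y‖ :=
    (hπ.continuous_iteratedFDeriv le_rfl).norm
  have hbdd : BddAbove ((fun y => ‖iteratedFDeriv ℝ 2 π y‖) '' closedBall x (ε * ‖v‖)) :=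
    (isCompact_closedBall x _).bddAbove_image hcont.continuousOn
  have hMle : ∀ y ∈ closedBall x (ε * ‖v‖), ‖iteratedFDeriv ℝ 2 π y‖ ≤ M :=
    fun y hy => le_csSup hbdd ⟨y, hy, rfl⟩
  have hM0 : 0 ≤ M :=
    le_trans (norm_nonneg _) (hMle x (mem_closedBall_self hr0))
  -- Lipschitz bound on the first derivative via iteratedFDeriv 1
  have hF1 : Differentiable ℝ (iteratedFDeriv ℝ 1 π) :=
    hπ.differentiable_iteratedFDeriv (by norm_num)
  have hLip : ∀ y ∈ closedBall x (ε * ‖v‖), ∀ u : EuclideanSpace ℝ (Fin d),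
      |fderiv ℝ π y u - fderiv ℝ π x u| ≤ M * ‖y - x‖ * ‖u‖ := by
    intro y hy u
    have key : ‖iteratedFDeriv ℝ 1 π y - iteratedFDeriv ℝ 1 π x‖ ≤ M * ‖y - x‖ := by
      refine (convex_closedBall x (ε * ‖v‖)).norm_image_sub_le_of_norm_fderiv_le
        (fun z _ => (hF1 z)) (fun z hz => ?_) (mem_closedBall_self hr0) hy
      rw [norm_fderiv_iteratedFDeriv]
      exact hMle z hz
    have happ : (iteratedFDeriv ℝ 1 π y - iteratedFDeriv ℝ 1 π x) ![u]
        = fderiv ℝ π y u - fderiv ℝ π x u := by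
      simp [iteratedFDeriv_one_apply]
    calc |fderiv ℝ π y u - fderiv ℝ π x u|
        = ‖(iteratedFDeriv ℝ 1 π y - iteratedFDeriv ℝ 1 π x) ![u]‖ := by
          rw [happ]; rfl
      _ ≤ ‖iteratedFDeriv ℝ 1 π y - iteratedFDeriv ℝ 1 π x‖ * ∏ i, ‖(![u] : Fin 1 → _) i‖ :=
          ContinuousMultilinearMap.le_opNorm _ _
      _ ≤ M * ‖y - x‖ * ‖u‖ := by
          rw [Fin.prod_univ_one]
          simp only [Matrix.cons_val_zero]
          exact mul_le_mul_of_nonneg_right key (norm_nonneg _)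
  -- value of fderiv at x
  have hfx : ∀ u : EuclideanSpace ℝ (Fin d), fderiv ℝ π x u = c * ⟪w, u⟫ := by
    intro u
    have : fderiv ℝ π x = InnerProductSpace.toDual ℝ _ (c • w) := by
      rw [← hgrad]
      unfold gradient
      rw [LinearIsometryEquiv.apply_symm_apply]
    rw [this, InnerProductSpace.toDual_apply_apply, real_inner_smul_left]
  -- cancellation
  have hcancel : fderiv ℝ π x (-Rv) - fderiv ℝ π x v = 0 := by
    rw [map_neg, hfx, hfx, hinner]; ring
  -- the function g
  set g : ℝ → ℝ := fun t => π (x - t • Rv) - π (x + t • v) with hg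
  have hgd : ∀ t : ℝ, HasDerivAt g
      (fderiv ℝ π (x - t • Rv) (-Rv) - fderiv ℝ π (x + t • v) v) t := by
    intro t
    have h1 : HasDerivAt (fun t : ℝ => x - t • Rv) (-Rv) t := by
      simpa using ((hasDerivAt_id t).smul_const Rv).const_sub x
    have h2 : HasDerivAt (fun t : ℝ => x + t • v) v t := by
      simpa using ((hasDerivAt_id t).smul_const v).const_add x
    exact ((hdiff _).hasFDerivAt.comp_hasDerivAt t h1).sub
      ((hdiff _).hasFDerivAt.comp_hasDerivAt t h2)
  -- derivative bound on [0, ε]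
  have hderiv_bound : ∀ t ∈ Set.Icc (0:ℝ) ε,
      |fderiv ℝ π (x - t • Rv) (-Rv) - fderiv ℝ π (x + t • v) v| ≤ 2 * M * ‖v‖ ^ 2 * t := by
    intro t ht
    obtain ⟨ht0, htε⟩ := ht
    have hmem1 : x - t • Rv ∈ closedBall x (ε * ‖v‖) := by
      rw [mem_closedBall_iff_norm]
      rw [sub_sub_cancel_left, norm_neg, norm_smul, Real.norm_eq_abs, abs_of_nonneg ht0, hnormRv]
      exact mul_le_mul_of_nonneg_right htε (norm_nonneg v)
    have hmem2 : x + t • v ∈ closedBall x (ε * ‖v‖) := by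
      rw [mem_closedBall_iff_norm]
      rw [add_sub_cancel_left, norm_smul, Real.norm_eq_abs, abs_of_nonneg ht0]
      exact mul_le_mul_of_nonneg_right htε (norm_nonneg v)
    have b1 := hLip _ hmem1 (-Rv)
    have b2 := hLip _ hmem2 v
    rw [sub_sub_cancel_left, norm_neg] at b1
    rw [add_sub_cancel_left] at b2
    have e1 : ‖t • Rv‖ = t * ‖v‖ := by
      rw [norm_smul, Real.norm_eq_abs, abs_of_nonneg ht0, hnormRv]
    have e2 : ‖t • v‖ = t * ‖v‖ := by
      rw [norm_smul, Real.norm_eq_abs, abs_of_nonneg ht0]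
    rw [e1] at b1
    rw [e2] at b2
    have hnRv : ‖(-Rv : EuclideanSpace ℝ (Fin d))‖ = ‖v‖ := by rw [norm_neg, hnormRv]
    rw [hnRv] at b1
    calc |fderiv ℝ π (x - t • Rv) (-Rv) - fderiv ℝ π (x + t • v) v|
        = |(fderiv ℝ π (x - t • Rv) (-Rv) - fderiv ℝ π x (-Rv))
            - (fderiv ℝ π (x + t • v) v - fderiv ℝ π x v)
            + (fderiv ℝ π x (-Rv) - fderiv ℝ π x v)| := by ring_nf
      _ ≤ _ := by
          rw [hcancel, add_zero]
          calc |(fderiv ℝ π (x - t • Rv) (-Rv) - fderiv ℝ π x (-Rv))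
            - (fderiv ℝ π (x + t • v) v - fderiv ℝ π x v)|
              ≤ |fderiv ℝ π (x - t • Rv) (-Rv) - fderiv ℝ π x (-Rv)|
                + |fderiv ℝ π (x + t • v) v - fderiv ℝ π x v| := abs_sub _ _
            _ ≤ M * (t * ‖v‖) * ‖v‖ + M * (t * ‖v‖) * ‖v‖ := add_le_add b1 b2
            _ = 2 * M * ‖v‖ ^ 2 * t := by ring
  -- compare with quadratic
  have key : ∀ (s : ℝ), s = 1 ∨ s = -1 →
      s * g ε ≤ M * ‖v‖ ^ 2 * ε ^ 2 := by
    intro s hs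
    have h01 : (0:ℝ) ∈ Set.Icc (0:ℝ) ε := ⟨le_rfl, hε.le⟩
    have hε1 : ε ∈ Set.Icc (0:ℝ) ε := ⟨hε.le, le_rfl⟩
    have hmono : MonotoneOn (fun t => M * ‖v‖ ^ 2 * t ^ 2 - s * g t) (Set.Icc 0 ε) := by
      apply monotoneOn_of_deriv_nonneg (convex_Icc 0 ε)
      · apply Continuous.continuousOn
        have hgc : Continuous g := by
          have c1 : Continuous fun t : ℝ => x - t • Rv :=
            continuous_const.sub (continuous_id.smul continuous_const)
          have c2 : Continuous fun t : ℝ => x + t • v :=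
            continuous_const.add (continuous_id.smul continuous_const)
          exact (hdiff.continuous.comp c1).sub (hdiff.continuous.comp c2)
        exact (continuous_const.mul (continuous_pow 2)).sub (continuous_const.mul hgc)
      · intro t _
        apply DifferentiableAt.differentiableWithinAt
        exact ((differentiableAt_pow 2).const_mul _).sub
          (((hgd t).differentiableAt).const_mul s)
      · intro t ht
        rw [interior_Icc] at ht
        have hD : HasDerivAt (fun t => M * ‖v‖ ^ 2 * t ^ 2 - s * g t)
            (M * ‖v‖ ^ 2 * (2 * t) -
              s * (fderiv ℝ π (x - t • Rv) (-Rv) - fderiv ℝ π (x + t • v) v)) t := by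
          have hq : HasDerivAt (fun t : ℝ => M * ‖v‖ ^ 2 * t ^ 2) (M * ‖v‖ ^ 2 * (2 * t)) t := by
            simpa using ((hasDerivAt_pow 2 t).const_mul (M * ‖v‖ ^ 2))
          exact hq.sub ((hgd t).const_mul s)
        rw [hD.deriv]
        have hb := hderiv_bound t ⟨ht.1.le, ht.2.le⟩
        have hs1 : |s| = 1 := by rcases hs with h | h <;> simp [h]
        have : s * (fderiv ℝ π (x - t • Rv) (-Rv) - fderiv ℝ π (x + t • v) v)
            ≤ 2 * M * ‖v‖ ^ 2 * t := by
          calc s * _ ≤ |s * (fderiv ℝ π (x - t • Rv) (-Rv) - fderiv ℝ π (x + t • v) v)| :=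
                le_abs_self _
            _ = |fderiv ℝ π (x - t • Rv) (-Rv) - fderiv ℝ π (x + t • v) v| := by
                rw [abs_mul, hs1, one_mul]
            _ ≤ _ := hb
        linarith
    have hfin := hmono h01 hε1 hε.le
    have hg0 : g 0 = 0 := by simp [hg]
    norm_num [hg0] at hfin
    linarith
  have h1 := key 1 (Or.inl rfl)
  have h2 := key (-1) (Or.inr rfl)
  rw [one_mul] at h1
  have habs : |g ε| ≤ M * ‖v‖ ^ 2 * ε ^ 2 := abs_le.mpr ⟨by linarith, h1⟩
  calc |π (x - ε • Rv) - π (x + ε • v)| = |g ε| := rfl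
    _ ≤ M * ‖v‖ ^ 2 * ε ^ 2 := habs
    _ = ε ^ 2 * ‖v‖ ^ 2 * M := by ring
end

section
/- Let I be a finite set of size N, let p̄ ∈ (0,1], and let (pᵢ)_{i∈I} satisfy 0 ≤ pᵢ ≤ p̄. Consider the following random procedure: draw S ∼ Binomial(N, p̄); given S = s, choose a subset 𝒮 ⊆ I of size s uniformly at random; for each i ∈ 𝒮 independently set Xᵢ = 1 with probability pᵢ/p̄ and Xᵢ = 0 otherwise; for each i ∉ 𝒮 set Xᵢ = 0. Then the resulting random variables (Xᵢ)_{i∈I} are independent with Xᵢ ∼ Bernoulli(pᵢ); that is, for every A ⊆ I, the probability that Xᵢ = 1 for all i ∈ A and Xᵢ = 0 for all i ∉ A equals Π_{i∈A} pᵢ · Π_{i∉A} (1 − pᵢ). -/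
/-- correctness of the binomial subsampling scheme. Drawing
`S ∼ Binomial(N, p̄)`, then a uniformly random subset `𝒮` of size `S`, and thinning each
`i ∈ 𝒮` with probability `pᵢ/p̄`, produces independent `Bernoulli(pᵢ)` indicators: for every
`A ⊆ I`, the probability that `Xᵢ = 1` exactly for `i ∈ A` equals
`Π_{i∈A} pᵢ · Π_{i∉A} (1 − pᵢ)`. -/
theorem binomial_subsampling_correct {I : Type*} [Fintype I] [DecidableEq I]
    (pbar : ℝ) (hpbar : pbar ∈ Set.Ioc (0 : ℝ) 1)
    (p : I → ℝ) (hp : ∀ i, p i ∈ Set.Icc (0 : ℝ) pbar) :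
    ∀ A : Finset I,
      ∑ s ∈ Finset.range (Fintype.card I + 1),
        (((Fintype.card I).choose s : ℝ) * pbar ^ s
            * (1 - pbar) ^ (Fintype.card I - s))
          * (((Fintype.card I).choose s : ℝ))⁻¹
          * ∑ 𝒮 ∈ Finset.univ.powerset.filter
              (fun 𝒮 : Finset I => 𝒮.card = s ∧ A ⊆ 𝒮),
              (∏ i ∈ A, p i / pbar) * ∏ i ∈ 𝒮 \ A, (1 - p i / pbar)
      = (∏ i ∈ A, p i) * ∏ i ∈ Aᶜ, (1 - p i) := by
  intro A
  obtain ⟨hpb0, hpb1⟩ := hpbar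
  have hpb0' : pbar ≠ 0 := ne_of_gt hpb0
  set N := Fintype.card I with hN
  set g : Finset I → ℝ := fun 𝒮 =>
    pbar ^ 𝒮.card * (1 - pbar) ^ (N - 𝒮.card)
      * ((∏ i ∈ A, p i / pbar) * ∏ i ∈ 𝒮 \ A, (1 - p i / pbar)) with hg
  have step1 :
      ∑ s ∈ Finset.range (N + 1),
        (((N.choose s : ℝ)) * pbar ^ s * (1 - pbar) ^ (N - s))
          * ((N.choose s : ℝ))⁻¹
          * ∑ 𝒮 ∈ Finset.univ.powerset.filter
              (fun 𝒮 : Finset I => 𝒮.card = s ∧ A ⊆ 𝒮),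
              (∏ i ∈ A, p i / pbar) * ∏ i ∈ 𝒮 \ A, (1 - p i / pbar)
      = ∑ 𝒮 ∈ Finset.univ.powerset.filter (fun 𝒮 : Finset I => A ⊆ 𝒮), g 𝒮 := by
    rw [← Finset.sum_fiberwise_of_maps_to
      (g := fun 𝒮 : Finset I => 𝒮.card) (t := Finset.range (N + 1))
      (fun 𝒮 _ => Finset.mem_range.2 (Nat.lt_succ_of_le (Finset.card_le_card (Finset.subset_univ 𝒮)))) g]
    refine Finset.sum_congr rfl fun s hs => ?_
    have hsN : s ≤ N := Nat.lt_succ_iff.1 (Finset.mem_range.1 hs)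
    have hch : ((N.choose s : ℝ)) ≠ 0 :=
      (Nat.cast_pos.2 (Nat.choose_pos hsN)).ne'
    have hsetE : (Finset.univ.powerset.filter (fun 𝒮 : Finset I => A ⊆ 𝒮)).filter
        (fun 𝒮 => 𝒮.card = s)
        = Finset.univ.powerset.filter (fun 𝒮 : Finset I => 𝒮.card = s ∧ A ⊆ 𝒮) := by
      rw [Finset.filter_filter]
      exact Finset.filter_congr fun 𝒮 _ => by tauto
    rw [hsetE, Finset.mul_sum]
    refine Finset.sum_congr rfl fun 𝒮 h𝒮 => ?_
    have hcard : 𝒮.card = s := (Finset.mem_filter.1 h𝒮).2.1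
    simp only [hg, hcard]
    field_simp
  rw [step1]
  have step2 :
      ∑ 𝒮 ∈ Finset.univ.powerset.filter (fun 𝒮 : Finset I => A ⊆ 𝒮), g 𝒮
      = ∑ T ∈ Aᶜ.powerset,
          (∏ i ∈ A, p i) * ((∏ i ∈ T, (pbar - p i)) * ∏ i ∈ Aᶜ \ T, (1 - pbar)) := by
    refine Finset.sum_bij' (fun 𝒮 _ => 𝒮 \ A) (fun T _ => T ∪ A) ?_ ?_ ?_ ?_ ?_
    · intro 𝒮 h𝒮
      rw [Finset.mem_powerset]
      intro i hi
      simp only [Finset.mem_sdiff] at hi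
      simpa using hi.2
    · intro T hT
      simp only [Finset.mem_filter, Finset.mem_powerset]
      exact ⟨Finset.subset_univ _, Finset.subset_union_right⟩
    · intro 𝒮 h𝒮
      have hA𝒮 : A ⊆ 𝒮 := (Finset.mem_filter.1 h𝒮).2
      exact Finset.sdiff_union_of_subset hA𝒮
    · intro T hT
      have hTA : Disjoint T A := by
        rw [Finset.mem_powerset] at hT
        exact Finset.disjoint_left.2 fun i hi => by
          have := hT hi; simp only [Finset.mem_compl] at this; exact this
      exact Finset.union_sdiff_cancel_right hTA
    · intro 𝒮 h𝒮
      have hA𝒮 : A ⊆ 𝒮 := (Finset.mem_filter.1 h𝒮).2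
      have hdisj : Disjoint (𝒮 \ A) A := Finset.sdiff_disjoint
      have hcard : 𝒮.card = (𝒮 \ A).card + A.card := by
        have := Finset.card_le_card hA𝒮
        rw [Finset.card_sdiff_of_subset hA𝒮]
        omega
      have hcardN : N - 𝒮.card = (Aᶜ \ (𝒮 \ A)).card := by
        have h1 : (𝒮 \ A) ⊆ Aᶜ := fun i hi => by
          simp only [Finset.mem_sdiff] at hi; simpa using hi.2
        rw [Finset.card_sdiff_of_subset h1, Finset.card_compl, hcard]
        have : A.card ≤ N := Finset.card_le_card (Finset.subset_univ A) |>.trans_eq (Finset.card_univ)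
        omega
      simp only [hg]
      rw [hcardN, hcard, pow_add]
      have e1 : pbar ^ A.card * ∏ i ∈ A, p i / pbar = ∏ i ∈ A, p i := by
        rw [← Finset.prod_const, ← Finset.prod_mul_distrib]
        exact Finset.prod_congr rfl fun i _ => by field_simp
      have e2 : pbar ^ (𝒮 \ A).card * ∏ i ∈ 𝒮 \ A, (1 - p i / pbar)
          = ∏ i ∈ 𝒮 \ A, (pbar - p i) := by
        rw [← Finset.prod_const, ← Finset.prod_mul_distrib]
        exact Finset.prod_congr rfl fun i _ => by field_simp
      have e3 : (1 - pbar) ^ (Aᶜ \ (𝒮 \ A)).card = ∏ i ∈ Aᶜ \ (𝒮 \ A), (1 - pbar) := by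
        rw [Finset.prod_const]
      rw [e3]
      calc pbar ^ (𝒮 \ A).card * pbar ^ A.card * (∏ i ∈ Aᶜ \ (𝒮 \ A), (1 - pbar))
            * ((∏ i ∈ A, p i / pbar) * ∏ i ∈ 𝒮 \ A, (1 - p i / pbar))
          = (pbar ^ A.card * ∏ i ∈ A, p i / pbar)
            * ((pbar ^ (𝒮 \ A).card * ∏ i ∈ 𝒮 \ A, (1 - p i / pbar))
              * ∏ i ∈ Aᶜ \ (𝒮 \ A), (1 - pbar)) := by ring
        _ = _ := by rw [e1, e2]
  rw [step2, ← Finset.mul_sum, ← Finset.prod_add]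
  congr 1
  exact Finset.prod_congr rfl fun i _ => by ring
end
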